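/- arXiv:2410.21196 — 4 statements merged into one kernel-verified Lean document; each statement's English description precedes it below -/
import Mathlib

section
/- The operator S_C is self-adjoint with respect to the L² inner product: for all u₁, u₂ ∈ X̃²_C, ∫_{−1/2}^{1/2} u₂ (u₁'' − φ₁'') dx = ∫_{−1/2}^{1/2} u₁ (u₂'' − φ₂'') dx, where φᵢ = φ[uᵢ] for i = 1,2. -/
open MeasureTheory Filter Set

noncomputable section

/-- The open interval (-1/2, 1/2). -/
def Iv : Set ℝ := Set.Ioo (-(1/2) : ℝ) (1/2)

/-- The closed interval [-1/2, 1/2]. -/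
def Jv : Set ℝ := Set.Icc (-(1/2) : ℝ) (1/2)

/-- L² norm on (-1/2, 1/2). -/
def L2n (f : ℝ → ℝ) : ℝ := Real.sqrt (∫ x in Iv, (f x) ^ 2)

/-- H¹ norm on (-1/2, 1/2). -/
def H1n (f : ℝ → ℝ) : ℝ := Real.sqrt (∫ x in Iv, ((f x) ^ 2 + (deriv f x) ^ 2))

/-- φ = φ[u]: the solution of -Z φ'' + φ = P u on (-1/2,1/2) with periodic
boundary conditions. -/
def IsPhi (Z P : ℝ) (u φ : ℝ → ℝ) : Prop :=
  ContDiff ℝ 2 φ ∧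
  (∀ x ∈ Jv, -Z * deriv (deriv φ) x + φ x = P * u x) ∧
  φ (-(1/2)) = φ (1/2) ∧ deriv φ (-(1/2)) = deriv φ (1/2)

/-- Membership in X̃²_C : H² with Neumann boundary conditions and zero mean. -/
def MemX2t (u : ℝ → ℝ) : Prop :=
  ContDiff ℝ 2 u ∧ deriv u (-(1/2)) = 0 ∧ deriv u (1/2) = 0 ∧ (∫ x in Iv, u x) = 0

lemma contDiff_one_deriv {f : ℝ → ℝ} (hf : ContDiff ℝ 2 f) : ContDiff ℝ 1 (deriv f) :=
  (contDiff_succ_iff_deriv.mp (show ContDiff ℝ (1+1) f from by norm_num [hf])).2.2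

lemma cont_d2 {f : ℝ → ℝ} (hf : ContDiff ℝ 2 f) : Continuous (deriv (deriv f)) :=
  (contDiff_one_deriv hf).continuous_deriv le_rfl

lemma cont_d1 {f : ℝ → ℝ} (hf : ContDiff ℝ 2 f) : Continuous (deriv f) :=
  hf.continuous_deriv one_le_two

lemma iv_eq (f : ℝ → ℝ) : ∫ x in Iv, f x = ∫ x in (-(1/2):ℝ)..(1/2), f x := by
  rw [intervalIntegral.integral_of_le (by norm_num), MeasureTheory.integral_Ioc_eq_integral_Ioo]
  rfl

/-- Integration by parts. -/
lemma ibp (f g : ℝ → ℝ) (hf : ContDiff ℝ 2 f) (hg : ContDiff ℝ 2 g) :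
    ∫ x in (-(1/2):ℝ)..(1/2), f x * deriv (deriv g) x
      = f (1/2) * deriv g (1/2) - f (-(1/2)) * deriv g (-(1/2))
        - ∫ x in (-(1/2):ℝ)..(1/2), deriv f x * deriv g x := by
  apply intervalIntegral.integral_mul_deriv_eq_deriv_mul
  · exact fun x _ => ((hf.differentiable two_ne_zero) x).hasDerivAt
  · exact fun x _ => (((contDiff_one_deriv hg).differentiable one_ne_zero) x).hasDerivAt
  · exact (cont_d1 hf).intervalIntegrable _ _
  · exact (cont_d2 hg).intervalIntegrable _ _

/-- the linearized operator S_C is self-adjoint with respect to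
the L² inner product. -/
theorem SC_self_adjoint
    (Z P : ℝ) (hZ : 0 < Z) (hP : 0 < P)
    (u₁ u₂ φ₁ φ₂ : ℝ → ℝ)
    (hu₁ : MemX2t u₁) (hu₂ : MemX2t u₂)
    (hφ₁ : IsPhi Z P u₁ φ₁) (hφ₂ : IsPhi Z P u₂ φ₂) :
    ∫ x in Iv, u₂ x * (deriv (deriv u₁) x - deriv (deriv φ₁) x)
      = ∫ x in Iv, u₁ x * (deriv (deriv u₂) x - deriv (deriv φ₂) x) := by
  obtain ⟨hc₁, hb₁a, hb₁b, -⟩ := hu₁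
  obtain ⟨hc₂, hb₂a, hb₂b, -⟩ := hu₂
  obtain ⟨hp₁, he₁, hpb₁, hpd₁⟩ := hφ₁
  obtain ⟨hp₂, he₂, hpb₂, hpd₂⟩ := hφ₂
  rw [iv_eq, iv_eq]
  -- split the integrals
  have hint : ∀ (f g : ℝ → ℝ), ContDiff ℝ 2 g → Continuous f →
      IntervalIntegrable (fun x => f x * deriv (deriv g) x) volume (-(1/2):ℝ) (1/2) :=
    fun f g hg hf => (hf.mul (cont_d2 hg)).intervalIntegrable _ _
  rw [show (fun x => u₂ x * (deriv (deriv u₁) x - deriv (deriv φ₁) x))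
      = fun x => u₂ x * deriv (deriv u₁) x - u₂ x * deriv (deriv φ₁) x from by
      funext x; ring]
  rw [show (fun x => u₁ x * (deriv (deriv u₂) x - deriv (deriv φ₂) x))
      = fun x => u₁ x * deriv (deriv u₂) x - u₁ x * deriv (deriv φ₂) x from by
      funext x; ring]
  rw [intervalIntegral.integral_sub (hint _ _ hc₁ hc₂.continuous) (hint _ _ hp₁ hc₂.continuous),
      intervalIntegral.integral_sub (hint _ _ hc₂ hc₁.continuous) (hint _ _ hp₂ hc₁.continuous)]
  have h1 : ∫ x in (-(1/2):ℝ)..(1/2), u₂ x * deriv (deriv u₁) x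
      = ∫ x in (-(1/2):ℝ)..(1/2), u₁ x * deriv (deriv u₂) x := by
    rw [ibp _ _ hc₂ hc₁, ibp _ _ hc₁ hc₂, hb₁a, hb₁b, hb₂a, hb₂b]
    simp only [mul_zero, sub_zero, zero_sub, neg_sub, zero_sub]
    congr 1
    exact intervalIntegral.integral_congr fun x _ => mul_comm _ _
  have h2 : ∫ x in (-(1/2):ℝ)..(1/2), u₂ x * deriv (deriv φ₁) x
      = ∫ x in (-(1/2):ℝ)..(1/2), u₁ x * deriv (deriv φ₂) x := by
    have key : ∀ (u φ ψ : ℝ → ℝ), ContDiff ℝ 2 φ → ContDiff ℝ 2 ψ →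
        (∀ x ∈ Jv, -Z * deriv (deriv ψ) x + ψ x = P * u x) →
        ψ (-(1/2)) = ψ (1/2) → deriv φ (-(1/2)) = deriv φ (1/2) →
        P * ∫ x in (-(1/2):ℝ)..(1/2), u x * deriv (deriv φ) x
          = -Z * (∫ x in (-(1/2):ℝ)..(1/2), deriv (deriv ψ) x * deriv (deriv φ) x)
            - ∫ x in (-(1/2):ℝ)..(1/2), deriv ψ x * deriv φ x := by
      intro u φ ψ hφ hψ he hbψ hdφ
      have step1 : P * ∫ x in (-(1/2):ℝ)..(1/2), u x * deriv (deriv φ) x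
          = ∫ x in (-(1/2):ℝ)..(1/2),
              (-Z * deriv (deriv ψ) x + ψ x) * deriv (deriv φ) x := by
        rw [← intervalIntegral.integral_const_mul]
        apply intervalIntegral.integral_congr
        intro x hx
        rw [Set.uIcc_of_le (by norm_num)] at hx
        show P * (u x * deriv (deriv φ) x) = (-Z * deriv (deriv ψ) x + ψ x) * deriv (deriv φ) x
        linear_combination (-(deriv (deriv φ) x)) * (he x hx)
      rw [step1]
      have e1 : IntervalIntegrable (fun x => -Z * deriv (deriv ψ) x * deriv (deriv φ) x)
          volume (-(1/2):ℝ) (1/2) :=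
        (((continuous_const.mul (cont_d2 hψ)).mul (cont_d2 hφ))).intervalIntegrable _ _
      have e2 : IntervalIntegrable (fun x => ψ x * deriv (deriv φ) x)
          volume (-(1/2):ℝ) (1/2) :=
        ((hψ.continuous.mul (cont_d2 hφ))).intervalIntegrable _ _
      rw [show (fun x => (-Z * deriv (deriv ψ) x + ψ x) * deriv (deriv φ) x)
          = fun x => -Z * deriv (deriv ψ) x * deriv (deriv φ) x
              + ψ x * deriv (deriv φ) x from by funext x; ring]
      rw [intervalIntegral.integral_add e1 e2, ibp _ _ hψ hφ, hbψ, hdφ]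
      rw [show (fun x => -Z * deriv (deriv ψ) x * deriv (deriv φ) x)
          = fun x => -Z * (deriv (deriv ψ) x * deriv (deriv φ) x) from by funext x; ring]
      rw [intervalIntegral.integral_const_mul]
      ring
    have k1 := key u₂ φ₁ φ₂ hp₁ hp₂ he₂ hpb₂ hpd₁
    have k2 := key u₁ φ₂ φ₁ hp₂ hp₁ he₁ hpb₁ hpd₂
    have hsym1 : ∫ x in (-(1/2):ℝ)..(1/2), deriv (deriv φ₂) x * deriv (deriv φ₁) x
        = ∫ x in (-(1/2):ℝ)..(1/2), deriv (deriv φ₁) x * deriv (deriv φ₂) x :=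
      intervalIntegral.integral_congr fun x _ => mul_comm _ _
    have hsym2 : ∫ x in (-(1/2):ℝ)..(1/2), deriv φ₂ x * deriv φ₁ x
        = ∫ x in (-(1/2):ℝ)..(1/2), deriv φ₁ x * deriv φ₂ x :=
      intervalIntegral.integral_congr fun x _ => mul_comm _ _
    have : P * ∫ x in (-(1/2):ℝ)..(1/2), u₂ x * deriv (deriv φ₁) x
        = P * ∫ x in (-(1/2):ℝ)..(1/2), u₁ x * deriv (deriv φ₂) x := by
      rw [k1, k2, hsym1, hsym2]
    exact mul_left_cancel₀ (ne_of_gt hP) this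
  rw [h1, h2]
end
end

section
/- Suppose Z>0, P>0 and P/Z < π². If u ∈ X̃²_C is an eigenvector of S_C with eigenvalue λ (i.e. u ≠ 0 and u'' − φ'' = λ u with φ = φ[u]), then λ ≤ P/Z − π² < 0. In particular, all eigenvalues of S_C are negative and bounded away from 0. -/
open MeasureTheory Filter Set

noncomputable section

section WirtAux
open intervalIntegral

-- limit lemma
lemma sq_limit {K C D : ℝ} (hK : 0 < K) (hC : 0 ≤ C)
    (h : ∀ k ∈ Ioo (0:ℝ) K, k ^ 2 * C ≤ D) : K ^ 2 * C ≤ D := by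
  rcases eq_or_lt_of_le hC with hC0 | hC0
  · have := h (K/2) ⟨by positivity, by linarith⟩
    nlinarith
  by_contra hcon
  push_neg at hcon
  have hD : 0 ≤ D := le_trans (by positivity) (h (K/2) ⟨by positivity, by linarith⟩)
  set t := D / C with ht
  have htlt : t < K ^ 2 := by
    rw [ht, div_lt_iff₀ hC0]; linarith
  have ht0 : 0 ≤ t := by positivity
  set k := Real.sqrt ((t + K ^ 2) / 2) with hk
  have hk2 : k ^ 2 = (t + K ^ 2) / 2 := Real.sq_sqrt (by linarith)
  have hkK : k < K := by
    nlinarith [Real.sqrt_nonneg ((t + K ^ 2) / 2)]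
  have hk0 : 0 < k := by
    have : 0 < k ^ 2 := by nlinarith
    positivity
  have := h k ⟨hk0, hkK⟩
  rw [ht] at htlt hk2
  have : D / C < k ^ 2 := by nlinarith
  rw [div_lt_iff₀ hC0] at this
  linarith

lemma wirt_core {f : ℝ → ℝ} (hf : ContDiff ℝ 1 f) {a b : ℝ} (hab : a < b)
    (hfa : f a = 0) {k : ℝ} (hk : k ∈ Ioo 0 (Real.pi / (2 * (b - a)))) :
    k ^ 2 * ∫ x in a..b, (f x) ^ 2 ≤ ∫ x in a..b, (deriv f x) ^ 2 := by
  obtain ⟨hk0, hkK⟩ := hk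
  have hba : 0 < b - a := by linarith
  have hkb : k * (b - a) < Real.pi / 2 := by
    rw [lt_div_iff₀ (by linarith : (0:ℝ) < 2 * (b - a))] at hkK
    nlinarith
  set δ : ℝ := Real.pi / 2 - k * (b - a) with hδ
  have hδ0 : 0 < δ := by simp only [hδ]; linarith
  set θ : ℝ → ℝ := fun x => k * (x - a) + δ with hθ
  have hθd : ∀ x, HasDerivAt θ k x := by
    intro x
    simpa [hθ] using (((hasDerivAt_id x).sub_const a).const_mul k).add_const δ
  have hθc : Continuous θ := by
    rw [hθ]
    exact (continuous_const.mul (continuous_id.sub continuous_const)).add continuous_const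
  have hθb : θ b = Real.pi / 2 := by simp only [hθ, hδ]; ring
  have hθmem : ∀ x ∈ Icc a b, δ ≤ θ x ∧ θ x ≤ Real.pi / 2 := by
    intro x hx
    constructor
    · simp only [hθ]; nlinarith [hx.1]
    · simp only [hθ, hδ]; nlinarith [hx.2]
  clear_value δ θ
  have hsin : ∀ x ∈ Icc a b, 0 < Real.sin (θ x) := by
    intro x hx
    have h1 := (hθmem x hx).1
    have h2 := (hθmem x hx).2
    have h3 := Real.pi_pos
    have hp1 : (0:ℝ) < θ x := by linarith
    have hp2 : θ x < Real.pi := by linarith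
    exact Real.sin_pos_of_pos_of_lt_pi hp1 hp2
  have hcont_f' : Continuous (deriv f) := hf.continuous_deriv le_rfl
  have hcont_f : Continuous f := hf.continuous
  have hdf : ∀ x, HasDerivAt f (deriv f x) x := fun x =>
    (hf.differentiable one_ne_zero x).hasDerivAt
  set G : ℝ → ℝ := fun x => (f x) ^ 2 * (k * Real.cos (θ x) / Real.sin (θ x)) with hG
  set G' : ℝ → ℝ := fun x =>
    (2 * f x * deriv f x) * (k * Real.cos (θ x) / Real.sin (θ x))
      + (f x) ^ 2 * (-(k ^ 2) / (Real.sin (θ x)) ^ 2) with hG'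
  have hGd : ∀ x ∈ Icc a b, HasDerivAt G (G' x) x := by
    intro x hx
    have hs := hsin x hx
    have hs' : Real.sin (θ x) ≠ 0 := ne_of_gt hs
    have hcos : HasDerivAt (fun y => Real.cos (θ y)) (-Real.sin (θ x) * k) x :=
      (Real.hasDerivAt_cos (θ x)).comp x (hθd x)
    have hsinD : HasDerivAt (fun y => Real.sin (θ y)) (Real.cos (θ x) * k) x :=
      (Real.hasDerivAt_sin (θ x)).comp x (hθd x)
    have hf2 : HasDerivAt (fun y => (f y) ^ 2) (2 * f x * deriv f x) x := by
      have h2 := (hdf x).mul (hdf x)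
      have he : deriv f x * f x + f x * deriv f x = 2 * f x * deriv f x := by ring
      rw [he] at h2
      simpa [pow_two, Pi.mul_def] using h2
    have hquot : HasDerivAt (fun y => k * Real.cos (θ y) / Real.sin (θ y))
        (-(k ^ 2) / (Real.sin (θ x)) ^ 2) x := by
      refine ((hcos.const_mul k).div hsinD hs').congr_deriv ?_
      have hpyth := Real.sin_sq_add_cos_sq (θ x)
      field_simp
      linear_combination (-1:ℝ) * hpyth
    exact hf2.mul hquot
  -- pointwise inequality G' ≤ f'^2 - k^2 f^2
  have hptwise : ∀ x ∈ Icc a b, G' x ≤ (deriv f x) ^ 2 - k ^ 2 * (f x) ^ 2 := by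
    intro x hx
    have hs := hsin x hx
    have hpyth := Real.sin_sq_add_cos_sq (θ x)
    have hrw : G' x = (2 * f x * deriv f x * k * Real.cos (θ x) * Real.sin (θ x)
        - f x ^ 2 * k ^ 2) / (Real.sin (θ x)) ^ 2 := by
      simp only [hG']
      field_simp
      ring
    rw [hrw, div_le_iff₀ (by positivity)]
    nlinarith [sq_nonneg (deriv f x * Real.sin (θ x) - f x * k * Real.cos (θ x)), hpyth,
      sq_nonneg (f x * k), sq_nonneg (f x * k * Real.sin (θ x))]
  -- FTC for G
  have hG'cont : ContinuousOn G' (Icc a b) := by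
    apply ContinuousOn.add
    · apply ContinuousOn.mul
      · exact ((continuous_const.mul hcont_f).mul hcont_f').continuousOn
      · apply ContinuousOn.div
        · exact (continuous_const.mul (Real.continuous_cos.comp hθc)).continuousOn
        · exact (Real.continuous_sin.comp hθc).continuousOn
        · exact fun x hx => ne_of_gt (hsin x hx)
    · apply ContinuousOn.mul
      · exact (hcont_f.pow 2).continuousOn
      · apply ContinuousOn.div
        · exact continuousOn_const
        · exact ((Real.continuous_sin.comp hθc).pow 2).continuousOn
        · exact fun x hx => pow_ne_zero 2 (ne_of_gt (hsin x hx))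
  have huIcc : uIcc a b = Icc a b := uIcc_of_le hab.le
  have hG'int : IntervalIntegrable G' volume a b := by
    apply ContinuousOn.intervalIntegrable; rw [huIcc]; exact hG'cont
  have hftc : ∫ x in a..b, G' x = G b - G a := by
    apply integral_eq_sub_of_hasDerivAt
    · intro x hx; rw [huIcc] at hx; exact hGd x hx
    · exact hG'int
  have hGa : G a = 0 := by simp [hG, hfa]
  have hGb : G b = 0 := by
    simp [hG, hθb, Real.cos_pi_div_two]
  have hint1 : IntervalIntegrable (fun x => (deriv f x) ^ 2) volume a b :=
    (hcont_f'.pow 2).intervalIntegrable a b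
  have hint2 : IntervalIntegrable (fun x => k ^ 2 * (f x) ^ 2) volume a b :=
    (continuous_const.mul (hcont_f.pow 2)).intervalIntegrable a b
  have hmono : ∫ x in a..b, G' x ≤ ∫ x in a..b, ((deriv f x) ^ 2 - k ^ 2 * (f x) ^ 2) := by
    apply integral_mono_on hab.le hG'int (hint1.sub hint2)
    exact hptwise
  rw [hftc, hGa, hGb, intervalIntegral.integral_sub hint1 hint2,
    intervalIntegral.integral_const_mul] at hmono
  linarith

lemma int_sym_split {g : ℝ → ℝ} (hg : Continuous g) (c : ℝ) :
    (∫ x in (-c)..c, g x) = (∫ x in (0:ℝ)..c, g (-x)) + ∫ x in (0:ℝ)..c, g x := by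
  have h1 : (∫ x in (0:ℝ)..c, g (-x)) = ∫ x in (-c)..(0:ℝ), g x := by
    simpa using intervalIntegral.integral_comp_neg (a := (0:ℝ)) (b := c) g
  rw [h1]
  exact (intervalIntegral.integral_add_adjacent_intervals (μ := volume)
    (hg.intervalIntegrable _ _) (hg.intervalIntegrable _ _)).symm

lemma int_odd {g : ℝ → ℝ} (hg : Continuous g) (hodd : ∀ x, g (-x) = -g x) (c : ℝ) :
    (∫ x in (-c)..c, g x) = 0 := by
  rw [int_sym_split hg c]
  simp only [hodd]
  rw [intervalIntegral.integral_neg]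
  ring

lemma int_even {g : ℝ → ℝ} (hg : Continuous g) (heven : ∀ x, g (-x) = g x) (c : ℝ) :
    (∫ x in (-c)..c, g x) = 2 * ∫ x in (0:ℝ)..c, g x := by
  rw [int_sym_split hg c]
  simp only [heven]
  ring

lemma exists_zero_pos_case {g : ℝ → ℝ} (hg : Continuous g) {a b : ℝ} (hab : a < b)
    (hnz : ∀ c ∈ Icc a b, g c ≠ 0) (ha : 0 < g a) :
    0 < ∫ x in a..b, g x := by
  apply intervalIntegral_pos_of_pos_on (hg.intervalIntegrable a b) _ hab
  intro x hx
  by_contra hle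
  push_neg at hle
  have hxmem : x ∈ Icc a b := ⟨hx.1.le, hx.2.le⟩
  have hlt : g x < 0 := lt_of_le_of_ne hle (hnz x hxmem)
  have hsub : Icc (g x) (g a) ⊆ g '' Icc a x :=
    intermediate_value_Icc' hx.1.le hg.continuousOn
  obtain ⟨c, hc, hgc⟩ := hsub ⟨hlt.le, ha.le⟩
  exact hnz c ⟨hc.1, le_trans hc.2 hx.2.le⟩ hgc

lemma exists_zero {g : ℝ → ℝ} (hg : Continuous g) {a b : ℝ} (hab : a < b)
    (hint : (∫ x in a..b, g x) = 0) : ∃ c ∈ Icc a b, g c = 0 := by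
  by_contra h
  push_neg at h
  have ha := h a ⟨le_refl a, hab.le⟩
  rcases lt_or_gt_of_ne ha with hneg | hpos
  · have := exists_zero_pos_case hg.neg hab (fun c hc => neg_ne_zero.mpr (h c hc))
      (by simpa using hneg)
    simp only [Pi.neg_apply] at this
    rw [intervalIntegral.integral_neg, hint] at this
    simp at this
  · have := exists_zero_pos_case hg hab h hpos
    rw [hint] at this
    exact lt_irrefl 0 this

lemma wirt_left {f : ℝ → ℝ} (hf : ContDiff ℝ 1 f) {a b : ℝ} (hab : a < b)
    (hfa : f a = 0) :
    (Real.pi / (2 * (b - a))) ^ 2 * ∫ x in a..b, (f x) ^ 2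
      ≤ ∫ x in a..b, (deriv f x) ^ 2 := by
  have hC : 0 ≤ ∫ x in a..b, (f x) ^ 2 :=
    intervalIntegral.integral_nonneg hab.le (fun x _ => sq_nonneg _)
  exact sq_limit (div_pos Real.pi_pos (by linarith)) hC
    (fun k hk => wirt_core hf hab hfa hk)

lemma wirt_right {f : ℝ → ℝ} (hf : ContDiff ℝ 1 f) {a b : ℝ} (hab : a < b)
    (hfb : f b = 0) :
    (Real.pi / (2 * (b - a))) ^ 2 * ∫ x in a..b, (f x) ^ 2
      ≤ ∫ x in a..b, (deriv f x) ^ 2 := by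
  set g : ℝ → ℝ := fun x => f (a + b - x) with hg
  have hdf : ∀ x, HasDerivAt f (deriv f x) x := fun x =>
    (hf.differentiable one_ne_zero x).hasDerivAt
  have hgd : ∀ x, HasDerivAt g (-deriv f (a + b - x)) x := by
    intro x
    have h1 : HasDerivAt (fun x : ℝ => a + b - x) (-1) x := by
      simpa using (hasDerivAt_id x).const_sub (a + b)
    simpa [Function.comp_def] using (hdf (a + b - x)).comp x h1
  have hgderiv : deriv g = fun x => -deriv f (a + b - x) := funext fun x => (hgd x).deriv
  have hgc : ContDiff ℝ 1 g := by
    apply hf.comp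
    exact (contDiff_const.sub contDiff_id)
  have hga : g a = 0 := by simpa [hg] using hfb
  have h := wirt_left hgc hab hga
  have e1 : (∫ x in a..b, (g x) ^ 2) = ∫ x in a..b, (f x) ^ 2 := by
    have := intervalIntegral.integral_comp_sub_left (a := a) (b := b)
      (fun y => (f y) ^ 2) (a + b)
    simpa [hg] using this
  have e2 : (∫ x in a..b, (deriv g x) ^ 2) = ∫ x in a..b, (deriv f x) ^ 2 := by
    rw [hgderiv]
    have := intervalIntegral.integral_comp_sub_left (a := a) (b := b)
      (fun y => (deriv f y) ^ 2) (a + b)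
    calc (∫ x in a..b, (-deriv f (a + b - x)) ^ 2)
        = ∫ x in a..b, (deriv f (a + b - x)) ^ 2 := by
          congr 1; funext x; ring
      _ = ∫ x in a..b, (deriv f x) ^ 2 := by simpa using this
  rw [e1, e2] at h
  exact h

/-- One-sided Wirtinger on a subinterval of length ≤ 1/2, with Dirichlet
condition at one end, with constant π². -/
lemma wirt_pi {f : ℝ → ℝ} (hf : ContDiff ℝ 1 f) {a b : ℝ} (hab : a ≤ b)
    (hba : b - a ≤ 1/2) (hzero : f a = 0 ∨ f b = 0) :
    Real.pi ^ 2 * ∫ x in a..b, (f x) ^ 2 ≤ ∫ x in a..b, (deriv f x) ^ 2 := by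
  rcases eq_or_lt_of_le hab with rfl | hlt
  · simp
  have hC : 0 ≤ ∫ x in a..b, (f x) ^ 2 :=
    intervalIntegral.integral_nonneg hab (fun x _ => sq_nonneg _)
  have hkey : (Real.pi / (2 * (b - a))) ^ 2 * ∫ x in a..b, (f x) ^ 2
      ≤ ∫ x in a..b, (deriv f x) ^ 2 := by
    rcases hzero with h | h
    · exact wirt_left hf hlt h
    · exact wirt_right hf hlt h
  refine le_trans ?_ hkey
  apply mul_le_mul_of_nonneg_right _ hC
  have h1 : Real.pi ≤ Real.pi / (2 * (b - a)) := by
    rw [le_div_iff₀ (by linarith)]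
    nlinarith [Real.pi_pos]
  have h2 : 0 ≤ Real.pi := Real.pi_pos.le
  nlinarith

/-- Wirtinger inequality with zero mean on (-1/2, 1/2). -/
lemma wirtinger {u : ℝ → ℝ} (hu : ContDiff ℝ 1 u)
    (hmean : (∫ x in (-(1/2):ℝ)..(1/2), u x) = 0) :
    Real.pi ^ 2 * ∫ x in (-(1/2):ℝ)..(1/2), (u x) ^ 2
      ≤ ∫ x in (-(1/2):ℝ)..(1/2), (deriv u x) ^ 2 := by
  have hcu : Continuous u := hu.continuous
  have hcu' : Continuous (deriv u) := hu.continuous_deriv le_rfl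
  have hdu : ∀ x, HasDerivAt u (deriv u x) x := fun x =>
    (hu.differentiable one_ne_zero x).hasDerivAt
  set e : ℝ → ℝ := fun x => (u x + u (-x)) / 2 with he
  set o : ℝ → ℝ := fun x => (u x - u (-x)) / 2 with ho
  set e' : ℝ → ℝ := fun x => (deriv u x - deriv u (-x)) / 2 with he'
  set o' : ℝ → ℝ := fun x => (deriv u x + deriv u (-x)) / 2 with ho'
  have hun : ContDiff ℝ 1 (fun x => u (-x)) := hu.comp (contDiff_id.neg)
  have hce : ContDiff ℝ 1 e := (hu.add hun).div_const 2
  have hco : ContDiff ℝ 1 o := (hu.sub hun).div_const 2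
  have hdun : ∀ x, HasDerivAt (fun y => u (-y)) (-deriv u (-x)) x := by
    intro x
    simpa [Function.comp_def] using (hdu (-x)).comp x (hasDerivAt_neg x)
  have hde : ∀ x, HasDerivAt e (e' x) x := by
    intro x
    have := ((hdu x).add (hdun x)).div_const 2
    simpa [he, he', sub_eq_add_neg] using this
  have hdo : ∀ x, HasDerivAt o (o' x) x := by
    intro x
    have := ((hdu x).sub (hdun x)).div_const 2
    simpa [ho, ho', sub_neg_eq_add] using this
  have hderiv_e : deriv e = e' := funext fun x => (hde x).deriv
  have hderiv_o : deriv o = o' := funext fun x => (hdo x).deriv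
  have hce' : Continuous e' := by
    rw [← hderiv_e]; exact hce.continuous_deriv le_rfl
  have hco' : Continuous o' := by
    rw [← hderiv_o]; exact hco.continuous_deriv le_rfl
  -- decomposition of u² and u'²
  have hu2 : (∫ x in (-(1/2):ℝ)..(1/2), (u x) ^ 2)
      = (∫ x in (-(1/2):ℝ)..(1/2), (e x) ^ 2) + ∫ x in (-(1/2):ℝ)..(1/2), (o x) ^ 2 := by
    have hsplit : ∀ x, (u x) ^ 2 = (e x) ^ 2 + (o x) ^ 2 + 2 * (e x * o x) := by
      intro x; simp only [he, ho]; ring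
    rw [intervalIntegral.integral_congr (g := fun x => (e x)^2 + (o x)^2 + 2*(e x * o x))
      (fun x _ => hsplit x)]
    rw [intervalIntegral.integral_add (f := fun x => (e x)^2 + (o x)^2) (g := fun x => 2*(e x * o x)) (((hce.continuous.pow 2).add (hco.continuous.pow 2)).intervalIntegrable _ _)
      ((continuous_const.mul (hce.continuous.mul hco.continuous)).intervalIntegrable _ _),
      intervalIntegral.integral_add (f := fun x => (e x)^2) (g := fun x => (o x)^2) ((hce.continuous.pow 2).intervalIntegrable _ _)
      ((hco.continuous.pow 2).intervalIntegrable _ _),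
      intervalIntegral.integral_const_mul]
    have hodd : ∀ x, e (-x) * o (-x) = -(e x * o x) := by
      intro x; simp only [he, ho, neg_neg]; ring
    have := int_odd (g := fun x => e x * o x) (hce.continuous.mul hco.continuous) hodd (1/2)
    rw [this]
    ring
  have hu'2 : (∫ x in (-(1/2):ℝ)..(1/2), (deriv u x) ^ 2)
      = (∫ x in (-(1/2):ℝ)..(1/2), (e' x) ^ 2) + ∫ x in (-(1/2):ℝ)..(1/2), (o' x) ^ 2 := by
    have hsplit : ∀ x, (deriv u x) ^ 2 = (e' x) ^ 2 + (o' x) ^ 2 + 2 * (e' x * o' x) := by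
      intro x; simp only [he', ho']; ring
    rw [intervalIntegral.integral_congr (g := fun x => (e' x)^2 + (o' x)^2 + 2*(e' x * o' x))
      (fun x _ => hsplit x)]
    rw [intervalIntegral.integral_add (f := fun x => (e' x)^2 + (o' x)^2) (g := fun x => 2*(e' x * o' x)) (((hce'.pow 2).add (hco'.pow 2)).intervalIntegrable _ _)
      ((continuous_const.mul (hce'.mul hco')).intervalIntegrable _ _),
      intervalIntegral.integral_add (f := fun x => (e' x)^2) (g := fun x => (o' x)^2) ((hce'.pow 2).intervalIntegrable _ _)
      ((hco'.pow 2).intervalIntegrable _ _),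
      intervalIntegral.integral_const_mul]
    have hodd : ∀ x, e' (-x) * o' (-x) = -(e' x * o' x) := by
      intro x; simp only [he', ho', neg_neg]; ring
    have := int_odd (g := fun x => e' x * o' x) (hce'.mul hco') hodd (1/2)
    rw [this]
    ring
  -- reduce to [0, 1/2]
  have he2 : (∫ x in (-(1/2):ℝ)..(1/2), (e x) ^ 2) = 2 * ∫ x in (0:ℝ)..(1/2), (e x) ^ 2 :=
    int_even (hce.continuous.pow 2) (fun x => by simp only [he, neg_neg, Pi.pow_apply]; ring) (1/2)
  have ho2 : (∫ x in (-(1/2):ℝ)..(1/2), (o x) ^ 2) = 2 * ∫ x in (0:ℝ)..(1/2), (o x) ^ 2 :=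
    int_even (hco.continuous.pow 2) (fun x => by simp only [ho, neg_neg, Pi.pow_apply]; ring) (1/2)
  have he'2 : (∫ x in (-(1/2):ℝ)..(1/2), (e' x) ^ 2) = 2 * ∫ x in (0:ℝ)..(1/2), (e' x) ^ 2 :=
    int_even (hce'.pow 2) (fun x => by simp only [he', neg_neg, Pi.pow_apply]; ring) (1/2)
  have ho'2 : (∫ x in (-(1/2):ℝ)..(1/2), (o' x) ^ 2) = 2 * ∫ x in (0:ℝ)..(1/2), (o' x) ^ 2 :=
    int_even (hco'.pow 2) (fun x => by simp only [ho', neg_neg, Pi.pow_apply]; ring) (1/2)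
  -- zero mean of e on [0,1/2]
  have hmean_e : (∫ x in (0:ℝ)..(1/2), e x) = 0 := by
    have h1 : (∫ x in (-(1/2):ℝ)..(1/2), e x) = 2 * ∫ x in (0:ℝ)..(1/2), e x :=
      int_even hce.continuous (fun x => by simp only [he, neg_neg]; ring) (1/2)
    have h2 : (∫ x in (-(1/2):ℝ)..(1/2), e x)
        = (∫ x in (-(1/2):ℝ)..(1/2), u x) / 2
          + (∫ x in (-(1/2):ℝ)..(1/2), (fun x => u (-x)) x) / 2 := by
      rw [intervalIntegral.integral_congr (g := fun x => u x / 2 + u (-x) / 2)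
        (fun x _ => by simp only [he]; ring)]
      rw [intervalIntegral.integral_add ((hcu.div_const 2).intervalIntegrable _ _)
        ((hun.continuous.div_const 2).intervalIntegrable _ _)]
      rw [intervalIntegral.integral_div, intervalIntegral.integral_div]
    have h3 : (∫ x in (-(1/2):ℝ)..(1/2), (fun x => u (-x)) x)
        = ∫ x in (-(1/2):ℝ)..(1/2), u x := by
      rw [intervalIntegral.integral_comp_neg]
      norm_num
    rw [h3, hmean] at h2
    have h4 : (∫ x in (-(1/2):ℝ)..(1/2), e x) = 0 := by rw [h2]; norm_num
    linarith [h1.symm.trans h4]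
  -- odd part: o 0 = 0
  have ho0 : o 0 = 0 := by simp [ho]
  have hoW : Real.pi ^ 2 * (∫ x in (0:ℝ)..(1/2), (o x) ^ 2)
      ≤ ∫ x in (0:ℝ)..(1/2), (o' x) ^ 2 := by
    have := wirt_pi (a := 0) (b := 1/2) hco (by norm_num) (by norm_num) (Or.inl ho0)
    rwa [hderiv_o] at this
  -- even part
  have heW : Real.pi ^ 2 * (∫ x in (0:ℝ)..(1/2), (e x) ^ 2)
      ≤ ∫ x in (0:ℝ)..(1/2), (e' x) ^ 2 := by
    obtain ⟨c, hc, hec⟩ := exists_zero hce.continuous (by norm_num : (0:ℝ) < 1/2) hmean_e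
    have hW1 : Real.pi ^ 2 * (∫ x in (0:ℝ)..c, (e x) ^ 2) ≤ ∫ x in (0:ℝ)..c, (e' x) ^ 2 := by
      have := wirt_pi hce hc.1 (by linarith [hc.2]) (Or.inr hec)
      rwa [hderiv_e] at this
    have hW2 : Real.pi ^ 2 * (∫ x in c..(1/2:ℝ), (e x) ^ 2) ≤ ∫ x in c..(1/2:ℝ), (e' x) ^ 2 := by
      have := wirt_pi hce hc.2 (by linarith [hc.1]) (Or.inl hec)
      rwa [hderiv_e] at this
    have hs1 : (∫ x in (0:ℝ)..c, (e x) ^ 2) + (∫ x in c..(1/2:ℝ), (e x) ^ 2)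
        = ∫ x in (0:ℝ)..(1/2:ℝ), (e x) ^ 2 :=
      intervalIntegral.integral_add_adjacent_intervals (μ := volume)
        ((hce.continuous.pow 2).intervalIntegrable _ _) ((hce.continuous.pow 2).intervalIntegrable _ _)
    have hs2 : (∫ x in (0:ℝ)..c, (e' x) ^ 2) + (∫ x in c..(1/2:ℝ), (e' x) ^ 2)
        = ∫ x in (0:ℝ)..(1/2:ℝ), (e' x) ^ 2 :=
      intervalIntegral.integral_add_adjacent_intervals (μ := volume)
        ((hce'.pow 2).intervalIntegrable _ _) ((hce'.pow 2).intervalIntegrable _ _)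
    rw [← hs1, ← hs2]
    linarith
  rw [hu2, hu'2, he2, ho2, he'2, ho'2]
  nlinarith [hoW, heW]

end WirtAux

lemma contDiff_deriv_of_two {f : ℝ → ℝ} (h : ContDiff ℝ 2 f) : ContDiff ℝ 1 (deriv f) := by
  rw [show (2 : WithTop ℕ∞) = 1 + 1 from rfl, contDiff_succ_iff_deriv] at h
  exact h.2.2

lemma setInt_eq (g : ℝ → ℝ) : (∫ x in Iv, g x) = ∫ x in (-(1/2):ℝ)..(1/2), g x := by
  rw [intervalIntegral.integral_of_le (by norm_num : (-(1/2):ℝ) ≤ 1/2),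
    MeasureTheory.integral_Ioc_eq_integral_Ioo]
  rfl

lemma uIcc_eq : Set.uIcc (-(1/2):ℝ) (1/2) = Jv := Set.uIcc_of_le (by norm_num)

/-- if P/Z < π², every eigenvalue λ of S_C satisfies
λ ≤ P/Z - π² < 0. -/
theorem SC_eigenvalues_negative
    (Z P lam : ℝ) (hZ : 0 < Z) (hP : 0 < P) (hPZ : P / Z < Real.pi ^ 2)
    (u φ : ℝ → ℝ) (hu : MemX2t u) (hne : ∃ x ∈ Jv, u x ≠ 0)
    (hφ : IsPhi Z P u φ)
    (heig : ∀ x ∈ Jv, deriv (deriv u) x - deriv (deriv φ) x = lam * u x) :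
    lam ≤ P / Z - Real.pi ^ 2 ∧ P / Z - Real.pi ^ 2 < 0 := by
  obtain ⟨hu2, hNl, hNr, hmean0⟩ := hu
  obtain ⟨hφ2, hφeq, hper0, hper1⟩ := hφ
  -- continuity facts
  have hcu : Continuous u := hu2.continuous
  have hcu1 : ContDiff ℝ 1 (deriv u) := contDiff_deriv_of_two hu2
  have hcu' : Continuous (deriv u) := hcu1.continuous
  have hcu'' : Continuous (deriv (deriv u)) := hcu1.continuous_deriv le_rfl
  have hcφ : Continuous φ := hφ2.continuous
  have hcφ1 : ContDiff ℝ 1 (deriv φ) := contDiff_deriv_of_two hφ2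
  have hcφ' : Continuous (deriv φ) := hcφ1.continuous
  have hcφ'' : Continuous (deriv (deriv φ)) := hcφ1.continuous_deriv le_rfl
  have hdu : ∀ x, HasDerivAt u (deriv u x) x := fun x =>
    (hu2.differentiable (by norm_num) x).hasDerivAt
  have hdu' : ∀ x, HasDerivAt (deriv u) (deriv (deriv u) x) x := fun x =>
    (hcu1.differentiable one_ne_zero x).hasDerivAt
  have hdφ : ∀ x, HasDerivAt φ (deriv φ x) x := fun x =>
    (hφ2.differentiable (by norm_num) x).hasDerivAt
  have hdφ' : ∀ x, HasDerivAt (deriv φ) (deriv (deriv φ) x) x := fun x =>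
    (hcφ1.differentiable one_ne_zero x).hasDerivAt
  set A := ∫ x in (-(1/2):ℝ)..(1/2), (u x) ^ 2 with hA
  set B := ∫ x in (-(1/2):ℝ)..(1/2), (deriv u x) ^ 2 with hB
  set M := ∫ x in (-(1/2):ℝ)..(1/2), φ x * u x with hM
  -- A > 0
  have hApos : 0 < A := by
    have hAset : A = ∫ x in Iv, (u x) ^ 2 := (setInt_eq _).symm
    rw [hAset]
    have hUopen : IsOpen {x : ℝ | u x ≠ 0} := isOpen_compl_singleton.preimage hcu
    obtain ⟨x₀, hx₀J, hx₀⟩ := hne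
    have hclos : x₀ ∈ closure (Set.Ioo (-(1/2):ℝ) (1/2)) := by
      rw [closure_Ioo (by norm_num : (-(1/2):ℝ) ≠ 1/2)]
      exact hx₀J
    obtain ⟨y, hyU, hyI⟩ := mem_closure_iff.mp hclos _ hUopen hx₀
    rw [MeasureTheory.setIntegral_pos_iff_support_of_nonneg_ae]
    · apply lt_of_lt_of_le _ (measure_mono (by
        intro z hz
        exact ⟨by simpa [Function.support, pow_eq_zero_iff] using hz.1, hz.2⟩ :
          ({x : ℝ | u x ≠ 0} ∩ Set.Ioo (-(1/2):ℝ) (1/2)) ⊆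
            (Function.support (fun x => (u x)^2) ∩ Iv)))
      exact (hUopen.inter isOpen_Ioo).measure_pos volume ⟨y, hyU, hyI⟩
    · exact Filter.Eventually.of_forall (fun x => sq_nonneg _)
    · exact (intervalIntegrable_iff_integrableOn_Ioo_of_le (by norm_num : (-(1/2):ℝ) ≤ 1/2)).mp
        ((hcu.pow 2).intervalIntegrable _ _)
  -- E1 : eigenvalue identity integrated against u
  have hE1 : (∫ x in (-(1/2):ℝ)..(1/2), deriv (deriv u) x * u x)
      - (∫ x in (-(1/2):ℝ)..(1/2), deriv (deriv φ) x * u x) = lam * A := by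
    have hcongr : (∫ x in (-(1/2):ℝ)..(1/2),
        (deriv (deriv u) x * u x - deriv (deriv φ) x * u x))
        = ∫ x in (-(1/2):ℝ)..(1/2), lam * (u x) ^ 2 := by
      apply intervalIntegral.integral_congr
      rw [uIcc_eq]
      intro x hx
      have h := heig x hx
      linear_combination (u x) * h
    rw [intervalIntegral.integral_sub (f := fun x => deriv (deriv u) x * u x) (g := fun x => deriv (deriv φ) x * u x) ((hcu''.mul hcu).intervalIntegrable _ _)
      ((hcφ''.mul hcu).intervalIntegrable _ _)] at hcongr
    rw [hcongr, intervalIntegral.integral_const_mul]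
  -- E2 : integration by parts for u
  have hE2 : (∫ x in (-(1/2):ℝ)..(1/2), deriv (deriv u) x * u x) = -B := by
    have hw : ∀ x ∈ Set.uIcc (-(1/2):ℝ) (1/2), HasDerivAt (fun y => u y * deriv u y)
        ((deriv u x) ^ 2 + deriv (deriv u) x * u x) x := by
      intro x _
      exact ((hdu x).mul (hdu' x)).congr_deriv (by ring)
    have hftc := intervalIntegral.integral_eq_sub_of_hasDerivAt hw
      (((hcu'.pow 2).add (hcu''.mul hcu)).intervalIntegrable _ _)
    rw [hNl, hNr] at hftc
    simp only [mul_zero, sub_zero] at hftc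
    rw [intervalIntegral.integral_add (f := fun x => (deriv u x)^2) (g := fun x => deriv (deriv u) x * u x) ((hcu'.pow 2).intervalIntegrable _ _)
      ((hcu''.mul hcu).intervalIntegrable _ _)] at hftc
    linarith [hftc]
  -- E3 : the phi'' * u integral
  have hE3 : (∫ x in (-(1/2):ℝ)..(1/2), deriv (deriv φ) x * u x) = (M - P * A) / Z := by
    have hcongr : (∫ x in (-(1/2):ℝ)..(1/2), deriv (deriv φ) x * u x)
        = ∫ x in (-(1/2):ℝ)..(1/2), (φ x * u x / Z - (P / Z) * (u x) ^ 2) := by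
      apply intervalIntegral.integral_congr
      rw [uIcc_eq]
      intro x hx
      have h := hφeq x hx
      have hZ' : Z ≠ 0 := ne_of_gt hZ
      field_simp
      linear_combination (-(u x)) * h
    rw [hcongr, intervalIntegral.integral_sub (f := fun x => φ x * u x / Z) (g := fun x => (P / Z) * (u x)^2)
      (((hcφ.mul hcu).div_const Z).intervalIntegrable _ _)
      ((continuous_const.mul (hcu.pow 2)).intervalIntegrable _ _),
      intervalIntegral.integral_div, intervalIntegral.integral_const_mul]
    rw [← hM]
    ring
  -- E4 : M ≥ 0
  have hE4 : 0 ≤ M := by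
    have hcongr : (∫ x in (-(1/2):ℝ)..(1/2), (P * (φ x * u x)))
        = ∫ x in (-(1/2):ℝ)..(1/2),
            (-Z * ((deriv φ x) ^ 2 + deriv (deriv φ) x * φ x)
              + (Z * (deriv φ x) ^ 2 + (φ x) ^ 2)) := by
      apply intervalIntegral.integral_congr
      rw [uIcc_eq]
      intro x hx
      have h := hφeq x hx
      linear_combination (-(φ x)) * h
    have hw : ∀ x ∈ Set.uIcc (-(1/2):ℝ) (1/2), HasDerivAt (fun y => φ y * deriv φ y)
        ((deriv φ x) ^ 2 + deriv (deriv φ) x * φ x) x := by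
      intro x _
      exact ((hdφ x).mul (hdφ' x)).congr_deriv (by ring)
    have hftc := intervalIntegral.integral_eq_sub_of_hasDerivAt hw
      (((hcφ'.pow 2).add (hcφ''.mul hcφ)).intervalIntegrable _ _)
    rw [hper0, hper1] at hftc
    simp only [sub_self] at hftc
    have e0 : (∫ x in (-(1/2):ℝ)..(1/2), (P * (φ x * u x))) = P * M := by
      rw [intervalIntegral.integral_const_mul, ← hM]
    have e1 : (∫ x in (-(1/2):ℝ)..(1/2),
          (-Z * ((deriv φ x) ^ 2 + deriv (deriv φ) x * φ x)
            + (Z * (deriv φ x) ^ 2 + (φ x) ^ 2)))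
        = (∫ x in (-(1/2):ℝ)..(1/2), -Z * ((deriv φ x) ^ 2 + deriv (deriv φ) x * φ x))
          + ∫ x in (-(1/2):ℝ)..(1/2), (Z * (deriv φ x) ^ 2 + (φ x) ^ 2) :=
      intervalIntegral.integral_add
        ((continuous_const.mul ((hcφ'.pow 2).add (hcφ''.mul hcφ))).intervalIntegrable _ _)
        (((continuous_const.mul (hcφ'.pow 2)).add (hcφ.pow 2)).intervalIntegrable _ _)
    have e2 : (∫ x in (-(1/2):ℝ)..(1/2), -Z * ((deriv φ x) ^ 2 + deriv (deriv φ) x * φ x))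
        = -Z * ∫ x in (-(1/2):ℝ)..(1/2), ((deriv φ x) ^ 2 + deriv (deriv φ) x * φ x) :=
      intervalIntegral.integral_const_mul _ _
    have e3 : (∫ x in (-(1/2):ℝ)..(1/2), (Z * (deriv φ x) ^ 2 + (φ x) ^ 2))
        = (∫ x in (-(1/2):ℝ)..(1/2), Z * (deriv φ x) ^ 2)
          + ∫ x in (-(1/2):ℝ)..(1/2), (φ x) ^ 2 :=
      intervalIntegral.integral_add
        ((continuous_const.mul (hcφ'.pow 2)).intervalIntegrable _ _)
        ((hcφ.pow 2).intervalIntegrable _ _)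
    have e4 : (∫ x in (-(1/2):ℝ)..(1/2), Z * (deriv φ x) ^ 2)
        = Z * ∫ x in (-(1/2):ℝ)..(1/2), (deriv φ x) ^ 2 :=
      intervalIntegral.integral_const_mul _ _
    have h1 : 0 ≤ ∫ x in (-(1/2):ℝ)..(1/2), (deriv φ x) ^ 2 :=
      intervalIntegral.integral_nonneg (by norm_num) (fun x _ => sq_nonneg _)
    have h2 : 0 ≤ ∫ x in (-(1/2):ℝ)..(1/2), (φ x) ^ 2 :=
      intervalIntegral.integral_nonneg (by norm_num) (fun x _ => sq_nonneg _)
    have hPM : P * M = Z * (∫ x in (-(1/2):ℝ)..(1/2), (deriv φ x) ^ 2)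
        + ∫ x in (-(1/2):ℝ)..(1/2), (φ x) ^ 2 := by
      rw [← e0, hcongr, e1, e2, hftc, e3, e4]
      ring
    nlinarith [hPM]
  -- E5 : Wirtinger
  have hE5 : Real.pi ^ 2 * A ≤ B := by
    apply wirtinger (hu2.of_le (by norm_num))
    rw [← setInt_eq]
    exact hmean0
  -- conclusion
  have hlamA : lam * A = -B - M / Z + (P / Z) * A := by
    rw [hE2, hE3] at hE1
    field_simp at hE1 ⊢
    linarith [hE1]
  have hMZ : 0 ≤ M / Z := div_nonneg hE4 hZ.le
  have hkey : lam * A ≤ (P / Z - Real.pi ^ 2) * A := by nlinarith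
  constructor
  · exact le_of_mul_le_mul_right (by linarith [hkey]) hApos
  · linarith
end
end

section
/- There exists a constant C>0, independent of u, P and Z, such that for every u ∈ H²(−1/2,1/2) with u'(±1/2)=0 and ∫_{−1/2}^{1/2} u dx = 0, the nonlinear part satisfies ‖Ψ(u)‖_{L²} ≤ C (P/Z) ‖u‖_{L²} ‖u‖_{H¹}. -/
open MeasureTheory Filter Set

noncomputable section

/-- The nonlinear part Ψ(u) = φ'(1/2) u' - (u φ')' (with φ = φ[u]). -/
def PsiOp (u φ : ℝ → ℝ) (x : ℝ) : ℝ :=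
  deriv φ (1/2) * deriv u x - deriv (fun y => u y * deriv φ y) x

/-! ### Auxiliary lemmas -/

lemma cont_integrableOn {f : ℝ → ℝ} (hf : Continuous f) : IntegrableOn f Iv :=
  (hf.continuousOn.integrableOn_Icc).mono_set Set.Ioo_subset_Icc_self

/-- Cauchy–Schwarz for set integrals over `Iv`. -/
lemma int_cs {f g : ℝ → ℝ} (hf : Continuous f) (hg : Continuous g) :
    (∫ x in Iv, f x * g x) ≤ Real.sqrt (∫ x in Iv, f x ^ 2) * Real.sqrt (∫ x in Iv, g x ^ 2) := by
  set A := ∫ x in Iv, f x ^ 2 with hA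
  set B := ∫ x in Iv, f x * g x with hB
  set C := ∫ x in Iv, g x ^ 2 with hC
  have hA0 : 0 ≤ A := setIntegral_nonneg measurableSet_Ioo (fun x _ => sq_nonneg _)
  have hC0 : 0 ≤ C := setIntegral_nonneg measurableSet_Ioo (fun x _ => sq_nonneg _)
  have key : ∀ t : ℝ, 0 ≤ A * (t * t) + (2 * B) * t + C := by
    intro t
    have h2 : 0 ≤ ∫ x in Iv, (t * f x + g x) ^ 2 :=
      setIntegral_nonneg measurableSet_Ioo (fun x _ => sq_nonneg _)
    have h3 : (∫ x in Iv, (t * f x + g x) ^ 2)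
        = (t*t) * A + (2*t) * B + C := by
      rw [hA, hB, hC]
      rw [show (fun x => (t * f x + g x) ^ 2) = fun x => (t*t) * f x ^ 2 + ((2*t) * (f x * g x) + g x ^ 2) from funext fun x => by ring]
      rw [integral_add, integral_add, integral_const_mul, integral_const_mul]
      · ring
      · exact cont_integrableOn (continuous_const.mul (hf.mul hg))
      · exact cont_integrableOn (hg.pow 2)
      · exact cont_integrableOn (continuous_const.mul (hf.pow 2))
      · exact (cont_integrableOn (continuous_const.mul (hf.mul hg))).add (cont_integrableOn (hg.pow 2))
    nlinarith [h2, h3]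
  have hd := discrim_le_zero key
  have hB2 : B ^ 2 ≤ A * C := by
    simp only [discrim] at hd; nlinarith
  calc B ≤ |B| := le_abs_self _
    _ = Real.sqrt (B ^ 2) := (Real.sqrt_sq_eq_abs B).symm
    _ ≤ Real.sqrt (A * C) := Real.sqrt_le_sqrt hB2
    _ = Real.sqrt A * Real.sqrt C := Real.sqrt_mul hA0 C

lemma int_Iv_one : (∫ _x in Iv, (1:ℝ)) = 1 := by
  rw [setIntegral_const, smul_eq_mul, mul_one]
  rw [Iv, Real.volume_real_Ioo]
  norm_num

lemma abs_intervalIntegral_le_intIv {h : ℝ → ℝ} (hh : Continuous h) {c d : ℝ}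
    (hc : c ∈ Jv) (hd : d ∈ Jv) : |∫ t in c..d, h t| ≤ ∫ t in Iv, |h t| := by
  have key : ∀ c d : ℝ, c ∈ Jv → d ∈ Jv → c ≤ d →
      |∫ t in c..d, h t| ≤ ∫ t in Iv, |h t| := by
    intro c d hc hd hcd
    have h1 : |∫ t in c..d, h t| ≤ ∫ t in c..d, |h t| :=
      intervalIntegral.abs_integral_le_integral_abs hcd
    have h2 : (∫ t in c..d, |h t|) = ∫ t in Ioc c d, |h t| :=
      intervalIntegral.integral_of_le hcd
    have h3 : (∫ t in Ioc c d, |h t|) ≤ ∫ t in Ioc (-(1/2) : ℝ) (1/2), |h t| := by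
      apply setIntegral_mono_set
      · exact (hh.abs.continuousOn.integrableOn_Icc).mono_set Set.Ioc_subset_Icc_self
      · exact Eventually.of_forall (fun x => abs_nonneg _)
      · exact HasSubset.Subset.eventuallyLE (Set.Ioc_subset_Ioc hc.1 hd.2)
    have h4 : (∫ t in Ioc (-(1/2) : ℝ) (1/2), |h t|) = ∫ t in Iv, |h t| :=
      integral_Ioc_eq_integral_Ioo
    calc |∫ t in c..d, h t| ≤ ∫ t in c..d, |h t| := h1
      _ = ∫ t in Ioc c d, |h t| := h2
      _ ≤ ∫ t in Ioc (-(1/2) : ℝ) (1/2), |h t| := h3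
      _ = ∫ t in Iv, |h t| := h4
  rcases le_total c d with hle | hle
  · exact key c d hc hd hle
  · rw [intervalIntegral.integral_symm, abs_neg]
    exact key d c hd hc hle

lemma abs_intervalIntegral_le_sqrt {h : ℝ → ℝ} (hh : Continuous h) {c d : ℝ}
    (hc : c ∈ Jv) (hd : d ∈ Jv) :
    |∫ t in c..d, h t| ≤ Real.sqrt (∫ x in Iv, h x ^ 2) := by
  have h5 : (∫ t in Iv, |h t|) ≤ Real.sqrt (∫ x in Iv, |h x| ^ 2) * Real.sqrt (∫ _x in Iv, (1:ℝ) ^ 2) := by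
    have := int_cs (f := fun x => |h x|) (g := fun _ => (1:ℝ)) hh.abs continuous_const
    simpa using this
  have h6 : Real.sqrt (∫ x in Iv, |h x| ^ 2) * Real.sqrt (∫ _x in Iv, (1:ℝ) ^ 2)
      = Real.sqrt (∫ x in Iv, h x ^ 2) := by
    have e1 : (∫ x in Iv, |h x| ^ 2) = ∫ x in Iv, h x ^ 2 := by
      congr 1; funext x; exact sq_abs _
    have e2 : (∫ _x in Iv, (1:ℝ) ^ 2) = 1 := by simpa using int_Iv_one
    rw [e1, e2, Real.sqrt_one, mul_one]
  calc |∫ t in c..d, h t| ≤ ∫ t in Iv, |h t| := abs_intervalIntegral_le_intIv hh hc hd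
    _ ≤ _ := h5
    _ = _ := h6

lemma deriv2_cont {φ : ℝ → ℝ} (hφ : ContDiff ℝ 2 φ) : Continuous (deriv (deriv φ)) := by
  have h2 : ContDiff ℝ 1 (deriv φ) := (contDiff_succ_iff_deriv.mp (by exact_mod_cast hφ)).2.2
  exact h2.continuous_deriv le_rfl

lemma deriv_diff {φ : ℝ → ℝ} (hφ : ContDiff ℝ 2 φ) : Differentiable ℝ (deriv φ) := by
  have h2 : ContDiff ℝ 1 (deriv φ) := (contDiff_succ_iff_deriv.mp (by exact_mod_cast hφ)).2.2
  exact h2.differentiable one_ne_zero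

lemma exists_zero_s5 {u : ℝ → ℝ} (hu : Continuous u) (hmean : (∫ x in Iv, u x) = 0) :
    ∃ y ∈ Jv, u y = 0 := by
  by_contra hcon
  push_neg at hcon
  have main : ∀ v : ℝ → ℝ, Continuous v → (∫ x in Iv, v x) = 0 →
      (∀ x ∈ Jv, 0 < v x) → False := by
    intro v hv hm hpos
    have h1 : 0 < ∫ x in (-(1/2) : ℝ)..(1/2), v x := by
      apply intervalIntegral.intervalIntegral_pos_of_pos_on (hv.intervalIntegrable _ _)
      · intro x hx
        exact hpos x ⟨hx.1.le, hx.2.le⟩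
      · norm_num
    have h2 : (∫ x in (-(1/2) : ℝ)..(1/2), v x) = ∫ x in Iv, v x := by
      rw [intervalIntegral.integral_of_le (by norm_num), integral_Ioc_eq_integral_Ioo, Iv]
    rw [h2, hm] at h1
    exact lt_irrefl 0 h1
  have haJ : (-(1/2) : ℝ) ∈ Jv := by constructor <;> norm_num
  have hsign : ∀ x ∈ Jv, 0 < u x ∨ u x < 0 := fun x hx => (hcon x hx).lt_or_gt.symm
  have hivt : ∀ x ∈ Jv, (0 < u (-(1/2)) → 0 < u x) ∧ (u (-(1/2)) < 0 → u x < 0) := by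
    intro x hx
    have hsub : uIcc (-(1/2) : ℝ) x ⊆ Jv := by
      rw [uIcc_of_le hx.1]
      exact Icc_subset_Icc le_rfl hx.2
    have hcont : ContinuousOn u (uIcc (-(1/2) : ℝ) x) := hu.continuousOn
    constructor
    · intro hpos
      rcases hsign x hx with h | h
      · exact h
      · exfalso
        have h0 : (0:ℝ) ∈ uIcc (u (-(1/2))) (u x) := by
          rw [Set.mem_uIcc]; right; exact ⟨h.le, hpos.le⟩
        obtain ⟨y, hy, hy0⟩ := intermediate_value_uIcc hcont h0
        exact hcon y (hsub hy) hy0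
    · intro hneg
      rcases hsign x hx with h | h
      · exfalso
        have h0 : (0:ℝ) ∈ uIcc (u (-(1/2))) (u x) := by
          rw [Set.mem_uIcc]; left; exact ⟨hneg.le, h.le⟩
        obtain ⟨y, hy, hy0⟩ := intermediate_value_uIcc hcont h0
        exact hcon y (hsub hy) hy0
      · exact h
  rcases hsign _ haJ with hpos | hneg
  · exact main u hu hmean (fun x hx => (hivt x hx).1 hpos)
  · apply main (fun x => -u x) hu.neg (by rw [integral_neg, hmean, neg_zero])
    intro x hx
    simpa using (hivt x hx).2 hneg

lemma sup_bound {u : ℝ → ℝ} (hu : ContDiff ℝ 2 u) (hmean : (∫ x in Iv, u x) = 0)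
    {x : ℝ} (hx : x ∈ Jv) :
    |u x| ≤ Real.sqrt (∫ t in Iv, (u t ^ 2 + deriv u t ^ 2)) := by
  have hucont : Continuous u := hu.continuous
  have hu'cont : Continuous (deriv u) := hu.continuous_deriv (by norm_num)
  have hudiff : Differentiable ℝ u := hu.differentiable (by norm_num)
  obtain ⟨y, hy, hy0⟩ := exists_zero_s5 hucont hmean
  have hftc : (∫ t in y..x, 2 * u t * deriv u t) = u x ^ 2 - u y ^ 2 := by
    apply intervalIntegral.integral_eq_sub_of_hasDerivAt
    · intro t _
      have := ((hudiff t).hasDerivAt).fun_pow 2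
      simpa [mul_comm, mul_assoc] using this
    · exact ((continuous_const.mul hucont).mul hu'cont).intervalIntegrable _ _
  have h1 : u x ^ 2 ≤ ∫ t in Iv, |2 * u t * deriv u t| := by
    have := abs_intervalIntegral_le_intIv (h := fun t => 2 * u t * deriv u t)
      ((continuous_const.mul hucont).mul hu'cont) hy hx
    rw [hftc, hy0] at this
    have e : |u x ^ 2 - 0 ^ 2| = u x ^ 2 := by
      rw [show u x ^ 2 - 0 ^ 2 = u x ^ 2 by ring, abs_of_nonneg (sq_nonneg _)]
    rw [← e]
    exact this
  have h2 : (∫ t in Iv, |2 * u t * deriv u t|) = 2 * ∫ t in Iv, |u t| * |deriv u t| := by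
    rw [← integral_const_mul]
    congr 1; funext t
    rw [abs_mul, abs_mul]
    simp [abs_of_nonneg, mul_assoc]
  have h3 : (∫ t in Iv, |u t| * |deriv u t|)
      ≤ Real.sqrt (∫ t in Iv, u t ^ 2) * Real.sqrt (∫ t in Iv, deriv u t ^ 2) := by
    have := int_cs hucont.abs hu'cont.abs
    simpa [sq_abs] using this
  have hU0 : 0 ≤ ∫ t in Iv, u t ^ 2 := setIntegral_nonneg measurableSet_Ioo (fun t _ => sq_nonneg _)
  have hU'0 : 0 ≤ ∫ t in Iv, deriv u t ^ 2 := setIntegral_nonneg measurableSet_Ioo (fun t _ => sq_nonneg _)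
  have h4 : 2 * (Real.sqrt (∫ t in Iv, u t ^ 2) * Real.sqrt (∫ t in Iv, deriv u t ^ 2))
      ≤ (∫ t in Iv, u t ^ 2) + ∫ t in Iv, deriv u t ^ 2 := by
    nlinarith [Real.sq_sqrt hU0, Real.sq_sqrt hU'0,
      sq_nonneg (Real.sqrt (∫ t in Iv, u t ^ 2) - Real.sqrt (∫ t in Iv, deriv u t ^ 2)),
      Real.sqrt_nonneg (∫ t in Iv, u t ^ 2), Real.sqrt_nonneg (∫ t in Iv, deriv u t ^ 2)]
  have h5 : (∫ t in Iv, (u t ^ 2 + deriv u t ^ 2))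
      = (∫ t in Iv, u t ^ 2) + ∫ t in Iv, deriv u t ^ 2 :=
    integral_add (cont_integrableOn (hucont.pow 2)) (cont_integrableOn (hu'cont.pow 2))
  have h6 : u x ^ 2 ≤ ∫ t in Iv, (u t ^ 2 + deriv u t ^ 2) := by
    rw [h5]
    calc u x ^ 2 ≤ _ := h1
      _ = _ := h2
      _ ≤ _ := by linarith [h3, h4]
  calc |u x| = Real.sqrt (u x ^ 2) := (Real.sqrt_sq_eq_abs _).symm
    _ ≤ _ := Real.sqrt_le_sqrt h6

lemma energy {Z P : ℝ} {u φ : ℝ → ℝ} (hZ : 0 < Z) (hP : 0 < P)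
    (hu : Continuous u) (hφ : IsPhi Z P u φ) :
    Real.sqrt (∫ x in Iv, deriv (deriv φ) x ^ 2)
      ≤ (P / Z) * Real.sqrt (∫ x in Iv, u x ^ 2) := by
  obtain ⟨hφ2, hode, hbc1, hbc2⟩ := hφ
  set φ'' := deriv (deriv φ) with hφ''
  have hφc : Continuous φ := hφ2.continuous
  have hφ'c : Continuous (deriv φ) := hφ2.continuous_deriv (by norm_num)
  have hφ''c : Continuous φ'' := deriv2_cont hφ2
  have hφd : Differentiable ℝ φ := hφ2.differentiable (by norm_num)
  have hφ'd : Differentiable ℝ (deriv φ) := deriv_diff hφ2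
  set E := ∫ x in Iv, φ'' x ^ 2 with hE
  set U := ∫ x in Iv, u x ^ 2 with hU
  have hE0 : 0 ≤ E := setIntegral_nonneg measurableSet_Ioo (fun x _ => sq_nonneg _)
  have hU0 : 0 ≤ U := setIntegral_nonneg measurableSet_Ioo (fun x _ => sq_nonneg _)
  have hpt : ∀ x ∈ Iv, Z * φ'' x ^ 2 = φ x * φ'' x - P * (u x * φ'' x) := by
    intro x hx
    have h := hode x (Set.Ioo_subset_Icc_self hx)
    linear_combination (-(φ'' x)) * h
  have hint1 : Z * E = (∫ x in Iv, φ x * φ'' x) - P * ∫ x in Iv, u x * φ'' x := by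
    have hcg : (∫ a in Iv, Z * φ'' a ^ 2) = ∫ x in Iv, (φ x * φ'' x - P * (u x * φ'' x)) :=
      setIntegral_congr_fun (by rw [Iv]; exact measurableSet_Ioo) hpt
    rw [hE, ← integral_const_mul, hcg]
    rw [integral_sub (cont_integrableOn (f := fun x => φ x * φ'' x) (hφc.mul hφ''c))
      (cont_integrableOn (f := fun x => P * (u x * φ'' x)) (continuous_const.mul (hu.mul hφ''c))), integral_const_mul]
  have hparts : (∫ x in Iv, φ x * φ'' x) = - ∫ x in Iv, deriv φ x ^ 2 := by
    have hle : (-(1/2) : ℝ) ≤ 1/2 := by norm_num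
    have h1 : (∫ x in Iv, φ x * φ'' x) = ∫ x in (-(1/2) : ℝ)..(1/2), φ x * φ'' x := by
      rw [intervalIntegral.integral_of_le hle, integral_Ioc_eq_integral_Ioo, Iv]
    have h2 : (∫ x in Iv, deriv φ x ^ 2) = ∫ x in (-(1/2) : ℝ)..(1/2), deriv φ x * deriv φ x := by
      rw [intervalIntegral.integral_of_le hle, integral_Ioc_eq_integral_Ioo, Iv]
      congr 1; funext x; ring
    rw [h1, h2]
    rw [intervalIntegral.integral_mul_deriv_eq_deriv_mul
      (u := φ) (v := deriv φ) (u' := deriv φ) (v' := φ'')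
      (fun x _ => (hφd x).hasDerivAt) (fun x _ => (hφ'd x).hasDerivAt)
      (hφ'c.intervalIntegrable _ _) (hφ''c.intervalIntegrable _ _)]
    rw [hbc1, hbc2]
    ring
  have hcs : (- ∫ x in Iv, u x * φ'' x) ≤ Real.sqrt U * Real.sqrt E := by
    have h := int_cs (f := fun x => -u x) (g := φ'') hu.neg hφ''c
    have e1 : (∫ x in Iv, (-u x) * φ'' x) = - ∫ x in Iv, u x * φ'' x := by
      rw [← integral_neg]; congr 1; funext x; ring
    have e2 : (∫ x in Iv, (-u x) ^ 2) = U := by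
      rw [hU]; congr 1; funext x; ring
    rw [e1, e2] at h
    exact h
  have hI'0 : 0 ≤ ∫ x in Iv, deriv φ x ^ 2 :=
    setIntegral_nonneg measurableSet_Ioo (fun x _ => sq_nonneg _)
  have hkey : Z * E ≤ P * (Real.sqrt U * Real.sqrt E) := by
    have h : Z * E ≤ P * (- ∫ x in Iv, u x * φ'' x) := by
      rw [hint1, hparts]; nlinarith [hI'0]
    calc Z * E ≤ _ := h
      _ ≤ P * (Real.sqrt U * Real.sqrt E) := mul_le_mul_of_nonneg_left hcs hP.le
  have hsE : Real.sqrt E ^ 2 = E := Real.sq_sqrt hE0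
  rcases eq_or_lt_of_le (Real.sqrt_nonneg E) with h0 | h0
  · rw [← h0]; positivity
  · rw [div_mul_eq_mul_div, le_div_iff₀ hZ]
    nlinarith [hkey, hsE]

/-- there is a constant C > 0 independent of u, P and Z with
‖Ψ(u)‖_{L²} ≤ C (P/Z) ‖u‖_{L²} ‖u‖_{H¹}. -/
theorem Psi_estimate :
    ∃ C > 0, ∀ Z P : ℝ, 0 < Z → 0 < P → ∀ u φ : ℝ → ℝ,
      MemX2t u → IsPhi Z P u φ →
      L2n (PsiOp u φ) ≤ C * (P / Z) * L2n u * H1n u := by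
  refine ⟨2, by norm_num, ?_⟩
  intro Z P hZ hP u φ hu hφ
  obtain ⟨hu2, -, -, hmean⟩ := hu
  have hφ2 : ContDiff ℝ 2 φ := hφ.1
  have hucont : Continuous u := hu2.continuous
  have hu'cont : Continuous (deriv u) := hu2.continuous_deriv (by norm_num)
  have hudiff : Differentiable ℝ u := hu2.differentiable (by norm_num)
  have hφ'c : Continuous (deriv φ) := hφ2.continuous_deriv (by norm_num)
  have hφ''c : Continuous (deriv (deriv φ)) := deriv2_cont hφ2
  have hφ'd : Differentiable ℝ (deriv φ) := deriv_diff hφ2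
  set φ'' := deriv (deriv φ) with hφ''def
  set A := Real.sqrt (∫ x in Iv, φ'' x ^ 2) with hAdef
  set M := H1n u with hMdef
  set L := L2n u with hLdef
  set U' := ∫ x in Iv, deriv u x ^ 2 with hU'def
  have hA0 : 0 ≤ A := Real.sqrt_nonneg _
  have hM0 : 0 ≤ M := Real.sqrt_nonneg _
  have hL0 : 0 ≤ L := Real.sqrt_nonneg _
  have hbJ : (1/2 : ℝ) ∈ Jv := by constructor <;> norm_num
  -- rewrite PsiOp via product rule
  have hps : PsiOp u φ = fun x => (deriv φ (1/2) - deriv φ x) * deriv u x - u x * φ'' x := by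
    funext x
    have hprod : deriv (fun y => u y * deriv φ y) x
        = deriv u x * deriv φ x + u x * φ'' x :=
      ((hudiff x).hasDerivAt.mul (hφ'd x).hasDerivAt).deriv
    rw [PsiOp, hprod]
    ring
  have hΨc : Continuous (PsiOp u φ) := by
    rw [hps]
    exact ((continuous_const.sub hφ'c).mul hu'cont).sub (hucont.mul hφ''c)
  -- pointwise bound on Jv
  have hbound : ∀ x ∈ Jv, |PsiOp u φ x| ≤ A * |deriv u x| + M * |φ'' x| := by
    intro x hx
    have hphi : |deriv φ (1/2) - deriv φ x| ≤ A := by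
      have hftc : (∫ t in x..(1/2 : ℝ), φ'' t) = deriv φ (1/2) - deriv φ x := by
        apply intervalIntegral.integral_eq_sub_of_hasDerivAt
        · intro t _
          exact (hφ'd t).hasDerivAt
        · exact hφ''c.intervalIntegrable _ _
      rw [← hftc]
      exact abs_intervalIntegral_le_sqrt hφ''c hx hbJ
    have husup : |u x| ≤ M := sup_bound hu2 hmean hx
    have h1 : |PsiOp u φ x|
        ≤ |deriv φ (1/2) - deriv φ x| * |deriv u x| + |u x| * |φ'' x| := by
      rw [hps]
      calc |(deriv φ (1/2) - deriv φ x) * deriv u x - u x * φ'' x|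
          ≤ |(deriv φ (1/2) - deriv φ x) * deriv u x| + |u x * φ'' x| := abs_sub _ _
        _ = |deriv φ (1/2) - deriv φ x| * |deriv u x| + |u x| * |φ'' x| := by
            rw [abs_mul, abs_mul]
    calc |PsiOp u φ x| ≤ _ := h1
      _ ≤ A * |deriv u x| + M * |φ'' x| := by
          have hb1 : 0 ≤ |deriv u x| := abs_nonneg _
          have hb2 : 0 ≤ |φ'' x| := abs_nonneg _
          gcongr
  -- squared integral bound
  have hintmono : (∫ x in Iv, PsiOp u φ x ^ 2)
      ≤ ∫ x in Iv, (A * |deriv u x| + M * |φ'' x|) ^ 2 := by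
    apply setIntegral_mono_on
    · exact cont_integrableOn (hΨc.pow 2)
    · exact cont_integrableOn
        (((continuous_const.mul hu'cont.abs).add (continuous_const.mul hφ''c.abs)).pow 2)
    · rw [Iv]; exact measurableSet_Ioo
    · intro x hx
      have := hbound x (Set.Ioo_subset_Icc_self hx)
      calc PsiOp u φ x ^ 2 = |PsiOp u φ x| ^ 2 := (sq_abs _).symm
        _ ≤ (A * |deriv u x| + M * |φ'' x|) ^ 2 := by
            apply pow_le_pow_left₀ (abs_nonneg _) this
  have hexpand : (∫ x in Iv, (A * |deriv u x| + M * |φ'' x|) ^ 2)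
      = A ^ 2 * U' + 2 * A * M * (∫ x in Iv, |deriv u x| * |φ'' x|)
        + M ^ 2 * ∫ x in Iv, φ'' x ^ 2 := by
    have e : (fun x => (A * |deriv u x| + M * |φ'' x|) ^ 2)
        = fun x => A ^ 2 * deriv u x ^ 2
            + ((2 * A * M) * (|deriv u x| * |φ'' x|) + M ^ 2 * φ'' x ^ 2) := by
      funext x
      have e1 : |deriv u x| ^ 2 = deriv u x ^ 2 := sq_abs _
      have e2 : |φ'' x| ^ 2 = φ'' x ^ 2 := sq_abs _
      nlinarith [e1, e2]
    have ia : (∫ x in Iv, (A ^ 2 * deriv u x ^ 2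
          + ((2 * A * M) * (|deriv u x| * |φ'' x|) + M ^ 2 * φ'' x ^ 2)))
        = (∫ x in Iv, A ^ 2 * deriv u x ^ 2)
          + ∫ x in Iv, ((2 * A * M) * (|deriv u x| * |φ'' x|) + M ^ 2 * φ'' x ^ 2) :=
      integral_add (cont_integrableOn (continuous_const.mul (hu'cont.pow 2)))
        ((cont_integrableOn (continuous_const.mul (hu'cont.abs.mul hφ''c.abs))).add
          (cont_integrableOn (continuous_const.mul (hφ''c.pow 2))))
    have ib : (∫ x in Iv, ((2 * A * M) * (|deriv u x| * |φ'' x|) + M ^ 2 * φ'' x ^ 2))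
        = (∫ x in Iv, (2 * A * M) * (|deriv u x| * |φ'' x|))
          + ∫ x in Iv, M ^ 2 * φ'' x ^ 2 :=
      integral_add (cont_integrableOn (continuous_const.mul (hu'cont.abs.mul hφ''c.abs)))
        (cont_integrableOn (continuous_const.mul (hφ''c.pow 2)))
    rw [e, ia, ib, integral_const_mul, integral_const_mul, integral_const_mul]
    ring
  have hcs2 : (∫ x in Iv, |deriv u x| * |φ'' x|) ≤ Real.sqrt U' * A := by
    have := int_cs hu'cont.abs hφ''c.abs
    simpa [sq_abs] using this
  have hU'0 : 0 ≤ U' := setIntegral_nonneg measurableSet_Ioo (fun x _ => sq_nonneg _)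
  have hE0 : 0 ≤ ∫ x in Iv, φ'' x ^ 2 :=
    setIntegral_nonneg measurableSet_Ioo (fun x _ => sq_nonneg _)
  have hsqA : A ^ 2 = ∫ x in Iv, φ'' x ^ 2 := Real.sq_sqrt hE0
  have hsqU' : Real.sqrt U' ^ 2 = U' := Real.sq_sqrt hU'0
  have htot : (∫ x in Iv, PsiOp u φ x ^ 2) ≤ (A * Real.sqrt U' + M * A) ^ 2 := by
    calc (∫ x in Iv, PsiOp u φ x ^ 2) ≤ _ := hintmono
      _ = _ := hexpand
      _ ≤ (A * Real.sqrt U' + M * A) ^ 2 := by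
          nlinarith [hcs2, hsqA, hsqU', hA0, hM0, Real.sqrt_nonneg U',
            mul_le_mul_of_nonneg_left hcs2 (by positivity : (0:ℝ) ≤ 2 * A * M)]
  have hL2 : L2n (PsiOp u φ) ≤ A * Real.sqrt U' + M * A := by
    rw [L2n]
    calc Real.sqrt (∫ x in Iv, PsiOp u φ x ^ 2)
        ≤ Real.sqrt ((A * Real.sqrt U' + M * A) ^ 2) := Real.sqrt_le_sqrt htot
      _ = A * Real.sqrt U' + M * A := Real.sqrt_sq (by positivity)
  -- component bounds
  have hA_le : A ≤ (P / Z) * L := energy hZ hP hucont hφ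
  have hU'_le : Real.sqrt U' ≤ M := by
    apply Real.sqrt_le_sqrt
    rw [hU'def]
    apply setIntegral_mono_on
    · exact cont_integrableOn (hu'cont.pow 2)
    · exact cont_integrableOn ((hucont.pow 2).add (hu'cont.pow 2))
    · rw [Iv]; exact measurableSet_Ioo
    · intro x _
      nlinarith [sq_nonneg (u x)]
  have hPZ0 : 0 ≤ P / Z := by positivity
  calc L2n (PsiOp u φ) ≤ A * Real.sqrt U' + M * A := hL2
    _ ≤ ((P / Z) * L) * M + M * ((P / Z) * L) := by
        have h1 : A * Real.sqrt U' ≤ ((P / Z) * L) * M :=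
          mul_le_mul hA_le hU'_le (Real.sqrt_nonneg _) (by positivity)
        have h2 : M * A ≤ M * ((P / Z) * L) := mul_le_mul_of_nonneg_left hA_le hM0
        linarith
    _ = 2 * (P / Z) * L * M := by ring
end
end

section
/- For every Z>0 with Z ≠ 1/12, the equation tanh(√(1−P)/(2√Z)) = P √(1−P)/(2√Z) has a smallest positive solution P₀(Z) other than P = 1; moreover P₀(Z) ∈ (0,1) when 0 < Z < 1/12, P₀(Z) ∈ (1,∞) when Z > 1/12, and as Z → ∞ one has P₀(Z) = π²Z + 1 − 8/π² + O(1/Z), in particular lim_{Z→∞} (P₀(Z) − π²Z) = 1 − 8/π². -/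
open MeasureTheory Filter Set

noncomputable section

/-- The bifurcation condition tanh(√(1-P)/(2√Z)) = P √(1-P)/(2√Z), interpreted
for P > 1 via analytic continuation as tan(√(P-1)/(2√Z)) = P √(P-1)/(2√Z). -/
def BifCond (Z P : ℝ) : Prop :=
  if P ≤ 1 then
    Real.tanh (Real.sqrt (1 - P) / (2 * Real.sqrt Z)) =
      P * Real.sqrt (1 - P) / (2 * Real.sqrt Z)
  else
    Real.tan (Real.sqrt (P - 1) / (2 * Real.sqrt Z)) =
      P * Real.sqrt (P - 1) / (2 * Real.sqrt Z)

set_option maxHeartbeats 1000000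

open Real


/-- helper: nonneg on Icc from derivative -/
lemma nonneg_on_Icc {g g' : ℝ → ℝ} (hg : ∀ x, HasDerivAt g (g' x) x)
    (h0 : g 0 = 0) {a x : ℝ} (hx : x ∈ Set.Icc (0:ℝ) a)
    (hd : ∀ y ∈ Set.Ioo (0:ℝ) a, 0 ≤ g' y) : 0 ≤ g x := by
  have hmono : MonotoneOn g (Set.Icc (0:ℝ) a) := by
    apply monotoneOn_of_deriv_nonneg (convex_Icc 0 a)
    · exact (Continuous.continuousOn (by
        exact continuous_iff_continuousAt.2 fun y => (hg y).continuousAt))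
    · intro y hy
      exact ((hg y).differentiableAt).differentiableWithinAt
    · intro y hy
      rw [interior_Icc] at hy
      rw [(hg y).deriv]
      exact hd y hy
  have h0a : (0:ℝ) ∈ Set.Icc (0:ℝ) a := ⟨le_refl _, hx.1.trans hx.2⟩
  have := hmono h0a hx hx.1
  linarith [this]

lemma nonneg_on_Ici {g g' : ℝ → ℝ} (hg : ∀ x, HasDerivAt g (g' x) x)
    (h0 : g 0 = 0) {x : ℝ} (hx : 0 ≤ x)
    (hd : ∀ y, 0 < y → 0 ≤ g' y) : 0 ≤ g x := by
  have hmono : MonotoneOn g (Set.Ici (0:ℝ)) := by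
    apply monotoneOn_of_deriv_nonneg (convex_Ici 0)
    · exact (Continuous.continuousOn (by
        exact continuous_iff_continuousAt.2 fun y => (hg y).continuousAt))
    · intro y hy
      exact ((hg y).differentiableAt).differentiableWithinAt
    · intro y hy
      rw [interior_Ici] at hy
      rw [(hg y).deriv]
      exact hd y hy
  have := hmono (Set.self_mem_Ici) hx hx
  linarith [this]
/-- sinh x ≤ x cosh x for x ≥ 0 -/
lemma sinh_le_mul_cosh {x : ℝ} (hx : 0 ≤ x) : Real.sinh x ≤ x * Real.cosh x := by
  have h := nonneg_on_Ici (g := fun x => x * Real.cosh x - Real.sinh x)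
    (g' := fun x => x * Real.sinh x)
    (fun y => by
      have h1 := ((hasDerivAt_id y).mul (Real.hasDerivAt_cosh y)).sub (Real.hasDerivAt_sinh y)
      exact h1.congr_deriv (by simp [id_eq, mul_comm]))
    (by simp) hx
    (fun y hy => mul_nonneg hy.le (Real.sinh_nonneg_iff.2 hy.le))
  linarith

/-- (x - x³/3) cosh x ≤ sinh x for x ≥ 0 -/
lemma mul_cosh_le_sinh {x : ℝ} (hx : 0 ≤ x) :
    (x - x^3/3) * Real.cosh x ≤ Real.sinh x := by
  have h := nonneg_on_Ici (g := fun x => Real.sinh x - (x - x^3/3) * Real.cosh x)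
    (g' := fun x => x * (x * Real.cosh x - Real.sinh x) + (x^3/3) * Real.sinh x)
    (fun y => by
      have h1 := (Real.hasDerivAt_sinh y).sub
        ((((hasDerivAt_id y).sub (((hasDerivAt_pow 3 y)).div_const 3)).mul
          (Real.hasDerivAt_cosh y)))
      exact h1.congr_deriv (by simp; ring))
    (by simp) hx
    (fun y hy => by
      have h1 := sinh_le_mul_cosh hy.le
      have h2 := Real.sinh_nonneg_iff.2 hy.le
      have h3 : (0:ℝ) ≤ y^3/3 := by positivity
      nlinarith)
  linarith

/-- sinh x ≤ (x - x³/3 + 2x⁵/15) cosh x for x ∈ [0,1] -/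
lemma sinh_le_mul_cosh' {x : ℝ} (hx : x ∈ Set.Icc (0:ℝ) 1) :
    Real.sinh x ≤ (x - x^3/3 + 2*x^5/15) * Real.cosh x := by
  have h := nonneg_on_Icc (g := fun x => (x - x^3/3 + 2*x^5/15) * Real.cosh x - Real.sinh x)
    (g' := fun x => (-x^2 + 2/3*x^4) * Real.cosh x + (x - x^3/3 + 2*x^5/15) * Real.sinh x)
    (fun y => by
      have h1 := ((((hasDerivAt_id y).sub ((hasDerivAt_pow 3 y).div_const 3)).add
        (((hasDerivAt_pow 5 y).const_mul 2).div_const 15)).mul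
          (Real.hasDerivAt_cosh y)).sub (Real.hasDerivAt_sinh y)
      exact h1.congr_deriv (by simp; ring))
    (by simp) hx
    (fun y hy => by
      have h1 := mul_cosh_le_sinh hy.1.le
      have hcp := Real.cosh_pos y
      have hy2 : y^2 ≤ 1 := by nlinarith [hy.1.le, hy.2.le]
      have hy3 : y^3 ≤ y := by nlinarith [hy.1.le]
      have hcoef : (0:ℝ) ≤ y - y^3/3 + 2*y^5/15 := by nlinarith [hy.1.le, pow_nonneg hy.1.le 5]
      have h8 : y^8 ≤ y^6 := by nlinarith [pow_nonneg hy.1.le 6]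
      have hb : (0:ℝ) ≤ (-y^2 + 2/3*y^4) + (y - y^3/3)*(y - y^3/3 + 2*y^5/15) := by nlinarith [h8, pow_nonneg hy.1.le 6]
      have h2 : (y - y^3/3) * (y - y^3/3 + 2*y^5/15) * Real.cosh y ≤
          (y - y^3/3 + 2*y^5/15) * Real.sinh y := by nlinarith [mul_le_mul_of_nonneg_right h1 hcoef]
      nlinarith [mul_nonneg hcp.le hb])
  linarith
/-- x cos x ≤ sin x on [0, π] -/
lemma mul_cos_le_sin {x : ℝ} (hx : x ∈ Set.Icc (0:ℝ) Real.pi) :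
    x * Real.cos x ≤ Real.sin x := by
  have h := nonneg_on_Icc (g := fun x => Real.sin x - x * Real.cos x)
    (g' := fun x => x * Real.sin x)
    (fun y => by
      have h1 := (Real.hasDerivAt_sin y).sub
        ((hasDerivAt_id y).mul (Real.hasDerivAt_cos y))
      exact h1.congr_deriv (by simp [id_eq, mul_comm]))
    (by simp) hx
    (fun y hy => mul_nonneg hy.1.le (Real.sin_nonneg_of_nonneg_of_le_pi hy.1.le hy.2.le))
  linarith

/-- sin x ≤ (x + 2x³) cos x on [0,1] -/
lemma sin_le_mul_cos {x : ℝ} (hx : x ∈ Set.Icc (0:ℝ) 1) :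
    Real.sin x ≤ (x + 2*x^3) * Real.cos x := by
  have h := nonneg_on_Icc (g := fun x => (x + 2*x^3) * Real.cos x - Real.sin x)
    (g' := fun x => 6*x^2 * Real.cos x - (x + 2*x^3) * Real.sin x)
    (fun y => by
      have h1 := (((hasDerivAt_id y).add ((hasDerivAt_pow 3 y).const_mul 2)).mul
        (Real.hasDerivAt_cos y)).sub (Real.hasDerivAt_sin y)
      exact h1.congr_deriv (by simp; ring))
    (by simp) hx
    (fun y hy => by
      have hs := Real.sin_le hy.1.le
      have hc := Real.one_sub_sq_div_two_le_cos (x := y)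
      have hsn : 0 ≤ Real.sin y := Real.sin_nonneg_of_nonneg_of_le_pi hy.1.le
        (by nlinarith [Real.pi_gt_three, hy.2.le])
      show (0:ℝ) ≤ 6*y^2 * Real.cos y - (y + 2*y^3) * Real.sin y
      have h6 := mul_le_mul_of_nonneg_left hc (by positivity : (0:ℝ) ≤ 6*y^2)
      have h7 := mul_le_mul_of_nonneg_left hs
        (by nlinarith [pow_nonneg hy.1.le 3, hy.1.le] : (0:ℝ) ≤ y + 2*y^3)
      have h8 : y^4 ≤ y^2 := by nlinarith [mul_nonneg (sq_nonneg y) (mul_nonneg (sub_nonneg.2 hy.2.le) (by linarith [hy.1] : (0:ℝ) ≤ y+1))]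
      nlinarith [h6, h7, h8])
  linarith

/-- sin x ≤ (x + x³/3 + x⁵) cos x on [0,1/2] -/
lemma sin_le_mul_cos' {x : ℝ} (hx : x ∈ Set.Icc (0:ℝ) (1/2)) :
    Real.sin x ≤ (x + x^3/3 + x^5) * Real.cos x := by
  have h := nonneg_on_Icc (g := fun x => (x + x^3/3 + x^5) * Real.cos x - Real.sin x)
    (g' := fun x => (x^2 + 5*x^4) * Real.cos x - (x + x^3/3 + x^5) * Real.sin x)
    (fun y => by
      have h1 := ((((hasDerivAt_id y).add ((hasDerivAt_pow 3 y).div_const 3)).add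
        (hasDerivAt_pow 5 y)).mul (Real.hasDerivAt_cos y)).sub (Real.hasDerivAt_sin y)
      exact h1.congr_deriv (by simp; ring))
    (by simp) hx
    (fun y hy => by
      have hs := Real.sin_le hy.1.le
      have hc := Real.one_sub_sq_div_two_le_cos (x := y)
      show (0:ℝ) ≤ (y^2 + 5*y^4) * Real.cos y - (y + y^3/3 + y^5) * Real.sin y
      have h6 := mul_le_mul_of_nonneg_left hc (by positivity : (0:ℝ) ≤ y^2 + 5*y^4)
      have h7 := mul_le_mul_of_nonneg_left hs
        (by nlinarith [pow_nonneg hy.1.le 3, pow_nonneg hy.1.le 5, hy.1.le] : (0:ℝ) ≤ y + y^3/3 + y^5)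
      have hy2 : y^2 ≤ 1/4 := by nlinarith [mul_nonneg (sub_nonneg.2 hy.2.le) (by linarith [hy.1] : (0:ℝ) ≤ y+1/2)]
      have h8 : y^6 ≤ y^4/4 := by nlinarith [pow_nonneg hy.1.le 4, hy2]
      have h9 : y^4 ≤ y^2/4 := by nlinarith [sq_nonneg y, hy2]
      nlinarith [h6, h7, h8, h9])
  linarith
noncomputable def svP (Z P : ℝ) : ℝ := Real.sqrt (1-P) / (2*Real.sqrt Z)
noncomputable def tvP (Z P : ℝ) : ℝ := Real.sqrt (P-1) / (2*Real.sqrt Z)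
noncomputable def fB (Z P : ℝ) : ℝ :=
  Real.sinh (svP Z P) - P * svP Z P * Real.cosh (svP Z P)
noncomputable def hB (Z P : ℝ) : ℝ :=
  Real.sin (tvP Z P) - P * tvP Z P * Real.cos (tvP Z P)
noncomputable def epsB (Z : ℝ) : ℝ := 4*Z*min (1/4) ((4*Z-1/3)/2)

lemma sv_nonneg (Z P : ℝ) : 0 ≤ svP Z P := by
  unfold svP; positivity

lemma tv_nonneg (Z P : ℝ) : 0 ≤ tvP Z P := by
  unfold tvP; positivity

lemma tv_pos {Z P : ℝ} (hZ : 0 < Z) (hP : 1 < P) : 0 < tvP Z P := by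
  unfold tvP
  have h1 : 0 < Real.sqrt (P-1) := Real.sqrt_pos.2 (by linarith)
  have h2 : 0 < Real.sqrt Z := Real.sqrt_pos.2 hZ
  positivity

lemma sv_sq {Z P : ℝ} (hZ : 0 < Z) (hP : P ≤ 1) : 4*Z*(svP Z P)^2 = 1 - P := by
  unfold svP
  have h2 : 0 < Real.sqrt Z := Real.sqrt_pos.2 hZ
  rw [div_pow, Real.sq_sqrt (by linarith : (0:ℝ) ≤ 1 - P), mul_pow, Real.sq_sqrt hZ.le]
  field_simp
  ring

lemma tv_sq {Z P : ℝ} (hZ : 0 < Z) (hP : 1 ≤ P) : 4*Z*(tvP Z P)^2 = P - 1 := by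
  unfold tvP
  have h2 : 0 < Real.sqrt Z := Real.sqrt_pos.2 hZ
  rw [div_pow, Real.sq_sqrt (by linarith : (0:ℝ) ≤ P - 1), mul_pow, Real.sq_sqrt hZ.le]
  field_simp
  ring

lemma bif_iff_f {Z P : ℝ} (hZ : 0 < Z) (hP : P ≤ 1) : BifCond Z P ↔ fB Z P = 0 := by
  unfold BifCond fB
  rw [if_pos hP, Real.tanh_eq_sinh_div_cosh,
    show Real.sqrt (1-P)/(2*Real.sqrt Z) = svP Z P from rfl]
  have hc := Real.cosh_pos (svP Z P)
  rw [div_eq_iff hc.ne']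
  constructor
  · intro h
    rw [show P * Real.sqrt (1-P) / (2*Real.sqrt Z) = P * svP Z P by
      unfold svP; ring] at h
    linarith
  · intro h
    rw [show P * Real.sqrt (1-P) / (2*Real.sqrt Z) = P * svP Z P by
      unfold svP; ring]
    linarith

lemma bif_iff_H {Z P : ℝ} (hZ : 0 < Z) (hP : 1 < P) : BifCond Z P ↔ hB Z P = 0 := by
  unfold BifCond hB
  rw [if_neg (by linarith), Real.tan_eq_sin_div_cos,
    show Real.sqrt (P-1)/(2*Real.sqrt Z) = tvP Z P from rfl]
  have htv := tv_pos hZ hP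
  have hrhs : P * Real.sqrt (P-1) / (2*Real.sqrt Z) = P * tvP Z P := by
    unfold tvP; ring
  rw [hrhs]
  have hPtv : 0 < P * tvP Z P := by positivity
  constructor
  · intro h
    by_cases hc : Real.cos (tvP Z P) = 0
    · rw [hc, div_zero] at h
      linarith
    · rw [div_eq_iff hc] at h
      linarith
  · intro h
    have hc : Real.cos (tvP Z P) ≠ 0 := by
      intro hc
      rw [hc] at h
      have := Real.sin_sq_add_cos_sq (tvP Z P)
      rw [hc] at this
      have hsin : Real.sin (tvP Z P) = 0 := by linarith [h]
      rw [hsin] at this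
      norm_num at this
    rw [div_eq_iff hc]
    linarith

lemma fB_cont (Z : ℝ) : Continuous (fun P => fB Z P) := by
  unfold fB svP
  fun_prop

lemma hB_cont (Z : ℝ) : Continuous (fun P => hB Z P) := by
  unfold hB tvP
  fun_prop
lemma neg_val {Z m s₀ : ℝ} (hm : 0 < m) (hkey : 0 < 1/3 - 4*Z - 2*m/15)
    (hs0 : 0 < s₀) (hsq : s₀^2 = m) (hs01 : s₀ ≤ 1) :
    Real.sinh s₀ - (1-4*Z*m)*s₀*Real.cosh s₀ < 0 := by
  have hsinh := sinh_le_mul_cosh' (x := s₀) ⟨hs0.le, hs01⟩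
  have hcp := Real.cosh_pos s₀
  have hpoly : s₀ - s₀^3/3 + 2*s₀^5/15 = s₀ - m*s₀/3 + 2*m^2*s₀/15 := by
    rw [← hsq]; ring
  rw [hpoly] at hsinh
  have key : (0:ℝ) < m*s₀*(1/3 - 4*Z - 2*m/15) := by positivity
  have hid : (s₀ - m*s₀/3 + 2*m^2*s₀/15)*Real.cosh s₀ - (1-4*Z*m)*s₀*Real.cosh s₀
      = -(m*s₀*(1/3-4*Z-2*m/15)*Real.cosh s₀) := by ring
  nlinarith [mul_pos key hcp]

noncomputable def KS (Z : ℝ) : Set ℝ := {P : ℝ | P ∈ Set.Icc (0:ℝ) 1 ∧ fB Z P = 0}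

lemma fB_at_zero {Z : ℝ} (hZ : 0 < Z) : 0 < fB Z 0 := by
  unfold fB svP
  have h2 : 0 < Real.sqrt Z := Real.sqrt_pos.2 hZ
  simp only [sub_zero, Real.sqrt_one, zero_mul, mul_zero]
  exact Real.sinh_pos_iff.2 (by positivity)

lemma case_small {Z : ℝ} (hZ : 0 < Z) (h12 : Z < 1/12) :
    sInf (KS Z) ∈ KS Z ∧ 0 < sInf (KS Z) ∧ sInf (KS Z) < 1 := by
  set m : ℝ := min (1/(8*Z)) (1/3 - 4*Z) with hm_def
  have hm : 0 < m := lt_min (by positivity) (by linarith)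
  have hm13 : m ≤ 1/3 - 4*Z := min_le_right _ _
  have hm8 : m ≤ 1/(8*Z) := min_le_left _ _
  set s₀ : ℝ := Real.sqrt m with hs0_def
  have hs0 : 0 < s₀ := Real.sqrt_pos.2 hm
  have hsq : s₀^2 = m := Real.sq_sqrt hm.le
  have hs01 : s₀ ≤ 1 := by
    rw [show (1:ℝ) = Real.sqrt 1 by rw [Real.sqrt_one]]
    exact Real.sqrt_le_sqrt (by linarith)
  set Pm : ℝ := 1 - 4*Z*m with hPm_def
  have hPm0 : 0 < Pm := by
    have : 4*Z*m ≤ 4*Z*(1/(8*Z)) := by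
      apply mul_le_mul_of_nonneg_left hm8 (by linarith)
    have h48 : 4*Z*(1/(8*Z)) = 1/2 := by field_simp; ring
    rw [h48] at this
    simp only [hPm_def]; linarith
  have hPm1 : Pm < 1 := by
    have : 0 < 4*Z*m := by positivity
    simp only [hPm_def]; linarith
  have hsv : svP Z Pm = s₀ := by
    unfold svP
    have h2 : 0 < Real.sqrt Z := Real.sqrt_pos.2 hZ
    have : (1 - Pm) = (2*Real.sqrt Z*s₀)^2 := by
      rw [mul_pow, mul_pow, Real.sq_sqrt hZ.le, hsq]
      simp only [hPm_def]; ring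
    rw [this, Real.sqrt_sq (by positivity)]
    field_simp
  have hfPm : fB Z Pm < 0 := by
    unfold fB
    rw [hsv]
    exact neg_val hm (by linarith) hs0 hsq hs01
  -- IVT
  have hcont : ContinuousOn (fun P => fB Z P) (Set.Icc 0 Pm) :=
    (fB_cont Z).continuousOn
  have hivt := intermediate_value_Icc' (le_of_lt hPm0) hcont
  have h0mem : (0:ℝ) ∈ Set.Icc (fB Z Pm) (fB Z 0) :=
    ⟨hfPm.le, (fB_at_zero hZ).le⟩
  obtain ⟨r, hr, hfr⟩ := hivt h0mem
  have hrK : r ∈ KS Z := ⟨⟨hr.1, hr.2.trans hPm1.le⟩, hfr⟩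
  have hKc : IsClosed (KS Z) := by
    have : KS Z = Set.Icc 0 1 ∩ (fB Z)⁻¹' {0} := by
      ext P; simp [KS]
    rw [this]
    exact isClosed_Icc.inter (isClosed_singleton.preimage (fB_cont Z))
  have hbdd : BddBelow (KS Z) := ⟨0, fun p hp => hp.1.1⟩
  have hne : (KS Z).Nonempty := ⟨r, hrK⟩
  have hmem := hKc.csInf_mem hne hbdd
  refine ⟨hmem, ?_, ?_⟩
  · rcases lt_or_eq_of_le hmem.1.1 with h | h
    · exact h
    · exfalso
      have := hmem.2
      rw [← h] at this
      exact absurd this.symm (ne_of_lt (fB_at_zero hZ))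
  · have : sInf (KS Z) ≤ r := csInf_le hbdd hrK
    calc sInf (KS Z) ≤ r := this
      _ ≤ Pm := hr.2
      _ < 1 := hPm1
noncomputable def MS (Z : ℝ) : Set ℝ :=
  {P : ℝ | P ∈ Set.Icc (1+epsB Z) (1+Real.pi^2*Z) ∧ hB Z P = 0}

lemma hB_neg_aux {Z θ : ℝ} (hθ : 0 < θ) (hθh : θ ≤ 1/2) (h13 : θ^2 < 4*Z - 1/3) :
    Real.sin θ - (1+4*Z*θ^2)*θ*Real.cos θ < 0 := by
  have hsin := sin_le_mul_cos' (x := θ) ⟨hθ.le, hθh⟩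
  have hcos : 0 < Real.cos θ := Real.cos_pos_of_mem_Ioo
    ⟨by linarith [Real.pi_gt_three], by linarith [Real.pi_gt_three]⟩
  have key : (0:ℝ) < θ^3*(4*Z - 1/3 - θ^2) := mul_pos (pow_pos hθ 3) (by linarith)
  have hid : (θ + θ^3/3 + θ^5)*Real.cos θ - (1+4*Z*θ^2)*θ*Real.cos θ
      = -(θ^3*(4*Z - 1/3 - θ^2)*Real.cos θ) := by ring
  nlinarith [mul_pos key hcos]

lemma fB_pos_aux {Z s : ℝ} (hs : 0 < s) (h13 : 1/3 < 4*Z) :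
    0 < Real.sinh s - (1-4*Z*s^2)*s*Real.cosh s := by
  have hsinh := mul_cosh_le_sinh hs.le
  have hcp := Real.cosh_pos s
  have key : (0:ℝ) < s^3*(4*Z - 1/3) := mul_pos (pow_pos hs 3) (by linarith)
  have hid : (s - s^3/3)*Real.cosh s - (1-4*Z*s^2)*s*Real.cosh s
      = s^3*(4*Z - 1/3)*Real.cosh s := by ring
  nlinarith [mul_pos key hcp]

lemma eps_pos {Z : ℝ} (h12 : 1/12 < Z) : 0 < epsB Z := by
  unfold epsB
  have : (0:ℝ) < min (1/4) ((4*Z-1/3)/2) := lt_min (by norm_num) (by linarith)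
  have hZ : (0:ℝ) < Z := by linarith
  positivity

lemma eps_le {Z : ℝ} (h12 : 1/12 < Z) : epsB Z ≤ Z := by
  unfold epsB
  have h1 : min (1/4) ((4*Z-1/3)/2) ≤ 1/4 := min_le_left _ _
  have hZ : (0:ℝ) < Z := by linarith
  nlinarith

lemma hB_neg {Z P : ℝ} (h12 : 1/12 < Z) (hP1 : 1 < P) (hP2 : P ≤ 1 + epsB Z) :
    hB Z P < 0 := by
  have hZ : (0:ℝ) < Z := by linarith
  have htv := tv_pos hZ hP1
  have hsq := tv_sq hZ hP1.le
  have hd2 : (tvP Z P)^2 ≤ min (1/4) ((4*Z-1/3)/2) := by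
    have : 4*Z*(tvP Z P)^2 ≤ 4*Z*min (1/4) ((4*Z-1/3)/2) := by
      rw [hsq]; unfold epsB at hP2; linarith
    have h4Z : (0:ℝ) < 4*Z := by linarith
    exact le_of_mul_le_mul_left this h4Z
  have hhalf : tvP Z P ≤ 1/2 := by
    nlinarith [hd2.trans (min_le_left _ _), htv.le]
  have h13 : (tvP Z P)^2 < 4*Z - 1/3 := by
    have := hd2.trans (min_le_right _ _)
    linarith
  have hPform : P = 1 + 4*Z*(tvP Z P)^2 := by linarith [hsq]
  unfold hB
  calc Real.sin (tvP Z P) - P * tvP Z P * Real.cos (tvP Z P)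
      = Real.sin (tvP Z P) - (1+4*Z*(tvP Z P)^2) * tvP Z P * Real.cos (tvP Z P) := by
        rw [← hPform]
    _ < 0 := hB_neg_aux htv hhalf h13

lemma hB_top {Z : ℝ} (hZ : 0 < Z) : hB Z (1 + Real.pi^2*Z) = 1 := by
  have hsZ : 0 < Real.sqrt Z := Real.sqrt_pos.2 hZ
  have htv : tvP Z (1 + Real.pi^2*Z) = Real.pi/2 := by
    unfold tvP
    rw [show (1 + Real.pi^2*Z - 1) = Real.pi^2*Z by ring,
      Real.sqrt_mul (by positivity) Z,
      Real.sqrt_sq Real.pi_pos.le]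
    field_simp
  unfold hB
  rw [htv, Real.sin_pi_div_two, Real.cos_pi_div_two]
  ring

lemma case_big {Z : ℝ} (h12 : 1/12 < Z) :
    sInf (MS Z) ∈ MS Z ∧ (∀ Q : ℝ, 1 < Q → hB Z Q = 0 → sInf (MS Z) ≤ Q) := by
  have hZ : (0:ℝ) < Z := by linarith
  have heps := eps_pos h12
  have hepsle : 1 + epsB Z ≤ 1 + Real.pi^2*Z := by
    have h1 := eps_le h12
    have hpi : (1:ℝ) ≤ Real.pi^2 := by nlinarith [Real.pi_gt_three]
    have h2 : 1*Z ≤ Real.pi^2*Z := mul_le_mul_of_nonneg_right hpi hZ.le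
    linarith
  have hlow : hB Z (1 + epsB Z) < 0 := hB_neg h12 (by linarith) (le_refl _)
  have hhigh : hB Z (1 + Real.pi^2*Z) = 1 := hB_top hZ
  -- IVT
  have hcont : ContinuousOn (fun P => hB Z P) (Set.Icc (1+epsB Z) (1+Real.pi^2*Z)) :=
    (hB_cont Z).continuousOn
  have hivt := intermediate_value_Icc hepsle hcont
  have h0mem : (0:ℝ) ∈ Set.Icc (hB Z (1+epsB Z)) (hB Z (1+Real.pi^2*Z)) := by
    constructor
    · exact hlow.le
    · rw [hhigh]; norm_num
  obtain ⟨r, hr, hfr⟩ := hivt h0mem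
  have hrM : r ∈ MS Z := ⟨hr, hfr⟩
  have hMc : IsClosed (MS Z) := by
    have : MS Z = Set.Icc (1+epsB Z) (1+Real.pi^2*Z) ∩ (hB Z)⁻¹' {0} := by
      ext P; simp [MS]
    rw [this]
    exact isClosed_Icc.inter (isClosed_singleton.preimage (hB_cont Z))
  have hbdd : BddBelow (MS Z) := ⟨1 + epsB Z, fun p hp => hp.1.1⟩
  have hne : (MS Z).Nonempty := ⟨r, hrM⟩
  have hmem := hMc.csInf_mem hne hbdd
  refine ⟨hmem, fun Q hQ1 hQ0 => ?_⟩
  by_cases hQle : Q ≤ 1 + Real.pi^2*Z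
  · by_cases hQeps : Q ≤ 1 + epsB Z
    · exfalso
      have := hB_neg h12 hQ1 hQeps
      rw [hQ0] at this
      norm_num at this
    · exact csInf_le hbdd ⟨⟨(not_le.1 hQeps).le, hQle⟩, hQ0⟩
  · calc sInf (MS Z) ≤ 1 + Real.pi^2*Z := hmem.1.2
      _ ≤ Q := (not_le.1 hQle).le

lemma asymp_key {Z u : ℝ} (hZ : 16 ≤ Z) (hu : 0 < u)
    (hw1 : 1 ≤ Real.pi/2 - u)
    (h1 : u*((1+4*Z*(Real.pi/2-u)^2)*(Real.pi/2-u)) ≤ 1)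
    (h2 : 1 ≤ (u+2*u^3)*((1+4*Z*(Real.pi/2-u)^2)*(Real.pi/2-u))) :
    |(1+4*Z*(Real.pi/2-u)^2) - (Real.pi^2*Z + 1 - 8/Real.pi^2)| ≤ 10/Z := by
  have pl : (3.141592:ℝ) < Real.pi := Real.pi_gt_d6
  have ph : Real.pi < 3.15 := Real.pi_lt_d2
  have hZ0 : (0:ℝ) < Z := by linarith
  have hw0 : (0:ℝ) < Real.pi/2 - u := by linarith
  have hw3 : (1:ℝ) ≤ (Real.pi/2 - u)^3 := one_le_pow₀ hw1
  -- the expansion identity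
  have hexp : u*((1+4*Z*(Real.pi/2-u)^2)*(Real.pi/2-u))
      = u*(Real.pi/2-u) + Real.pi^3*Z*u/2 - 3*Real.pi^2*Z*u^2
        + 6*Real.pi*Z*u^3 - 4*Z*u^4 := by ring
  -- u is small
  have h4Zu : 4*Z*u ≤ 1 := by
    nlinarith [h1, mul_nonneg (mul_nonneg (by linarith : (0:ℝ) ≤ 4*Z) hu.le)
      (by linarith : (0:ℝ) ≤ (Real.pi/2-u)^3 - 1), mul_nonneg hu.le hw0.le]
  have hZu : Z*u ≤ 1/4 := by linarith
  have hZunn : (0:ℝ) ≤ Z*u := by positivity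
  have hu64 : u ≤ 1/64 := by nlinarith
  have husq : u^2 ≤ u := by nlinarith
  -- hA1 : upper bound for π³Zu/2
  have nn1 : (0:ℝ) ≤ Real.pi*u := by positivity
  have nn2 : (0:ℝ) ≤ 6*Real.pi*Z*u^3 := by positivity
  have nn3 : (0:ℝ) ≤ 3*Real.pi^2*Z*u^2 := by positivity
  have nn4 : (0:ℝ) ≤ 4*Z*u^4 := by positivity
  have hA1 : Real.pi^3*Z*u/2 ≤ 1 + 3*Real.pi^2*Z*u^2 + 4*Z*u^4 + u^2 := by
    rw [hexp] at h1
    linarith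
  -- hA2 : lower bound
  have hidB : (u+2*u^3)*((1+4*Z*(Real.pi/2-u)^2)*(Real.pi/2-u))
      = u*((1+4*Z*(Real.pi/2-u)^2)*(Real.pi/2-u))
        + 2*u^2*(u*((1+4*Z*(Real.pi/2-u)^2)*(Real.pi/2-u))) := by ring
  have h2' : 2*u^2*(u*((1+4*Z*(Real.pi/2-u)^2)*(Real.pi/2-u))) ≤ 2*u^2 := by
    have := mul_le_mul_of_nonneg_left h1 (by positivity : (0:ℝ) ≤ 2*u^2)
    linarith
  have hA2pre : 1 - 2*u^2 ≤ u*((1+4*Z*(Real.pi/2-u)^2)*(Real.pi/2-u)) := by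
    rw [hidB] at h2
    linarith
  have hZu3 : Z*u^3 ≤ u^2/4 :=
    le_of_eq_of_le (by ring) (le_trans (mul_le_mul_of_nonneg_right hZu (sq_nonneg u))
      (by linarith [sq_nonneg u]))
  have h6pi : 6*Real.pi*Z*u^3 ≤ 5*u^2 := by
    have : 6*Real.pi*(Z*u^3) ≤ 6*Real.pi*(u^2/4) := by
      apply mul_le_mul_of_nonneg_left hZu3 (by positivity)
    nlinarith [sq_nonneg u]
  have hA2 : 1 - Real.pi*u/2 - 7*u^2 ≤ Real.pi^3*Z*u/2 := by
    rw [hexp] at hA2pre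
    linarith
  -- the quantity q = 8/π²
  set q : ℝ := 8/Real.pi^2 with hq_def
  have hpisq : (0:ℝ) < Real.pi^2 := by positivity
  have hq : q*Real.pi^2 = 8 := by rw [hq_def]; field_simp
  have hq0 : 0 < q := by positivity
  have hqb : q ≤ 0.82 := by
    rw [hq_def, div_le_iff₀ hpisq]
    nlinarith
  have hqZ : (0:ℝ) ≤ q*Z := by positivity
  have hlhs : q*Z*(Real.pi^3*Z*u/2) = 4*Real.pi*Z^2*u := by
    linear_combination (Real.pi*Z^2*u/2) * hq
  -- bounds on auxiliary products
  have b1 : Z^2*u^2 ≤ 1/16 := by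
    have h := mul_le_mul hZu hZu hZunn (by norm_num : (0:ℝ) ≤ 1/4)
    have hid : Z^2*u^2 = (Z*u)*(Z*u) := by ring
    linarith
  have d1 : q*(Z*u) ≤ 0.205 := by
    have h := mul_le_mul hqb hZu hZunn (by norm_num : (0:ℝ) ≤ 0.82)
    linarith
  have habs : (1+4*Z*(Real.pi/2-u)^2) - (Real.pi^2*Z + 1 - q)
      = -(4*Real.pi*Z*u) + 4*Z*u^2 + q := by ring
  rw [habs, abs_le]
  constructor
  · -- -(10/Z) ≤ -4πZu + 4Zu² + q  ⟺  4πZ²u - 4Z²u² - qZ ≤ 10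
    rw [neg_le, le_div_iff₀ hZ0]
    have hmul := mul_le_mul_of_nonneg_left hA1 hqZ
    rw [hlhs] at hmul
    -- hmul : 4πZ²u ≤ qZ(1 + 3π²Zu² + 4Zu⁴ + u²)
    have e1 : q*Z*(1 + 3*Real.pi^2*Z*u^2 + 4*Z*u^4 + u^2)
        = q*Z + 24*Z^2*u^2 + 4*q*Z^2*u^4 + q*Z*u^2 := by
      linear_combination (3*Z^2*u^2) * hq
    rw [e1] at hmul
    have hu2le : u^2 ≤ 1 := by nlinarith
    have s1 := mul_le_mul d1 hZu hZunn (by norm_num : (0:ℝ) ≤ 0.205)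
    have s2 := mul_le_mul s1 hu2le (sq_nonneg u)
      (by norm_num : (0:ℝ) ≤ 0.205*(1/4))
    have b2 : 4*q*Z^2*u^4 ≤ 1 := by
      have hid : 4*q*Z^2*u^4 = 4*(q*(Z*u)*(Z*u)*u^2) := by ring
      linarith
    have s3 := mul_le_mul d1 hu64 hu.le (by norm_num : (0:ℝ) ≤ 0.205)
    have b3 : q*Z*u^2 ≤ 1 := by
      have hid : q*Z*u^2 = q*(Z*u)*u := by ring
      linarith
    linarith [hmul, b1, b2, b3]
  · -- -4πZu + 4Zu² + q ≤ 10/Z ⟺ qZ + 4Z²u² - 4πZ²u ≤ 10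
    rw [le_div_iff₀ hZ0]
    have hmul := mul_le_mul_of_nonneg_left hA2 hqZ
    rw [hlhs] at hmul
    -- hmul : qZ(1 - πu/2 - 7u²) ≤ 4πZ²u
    have e2 : q*Z*(1 - Real.pi*u/2 - 7*u^2) = q*Z - q*(Z*u)*Real.pi/2 - 7*q*Z*u^2 := by
      ring
    rw [e2] at hmul
    have c1 : q*(Z*u)*Real.pi/2 ≤ 1 := by
      have h := mul_le_mul d1 ph.le Real.pi_pos.le (by norm_num : (0:ℝ) ≤ 0.205)
      linarith
    have s3 := mul_le_mul d1 hu64 hu.le (by norm_num : (0:ℝ) ≤ 0.205)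
    have c2 : 7*q*Z*u^2 ≤ 1 := by
      have hid : q*Z*u^2 = q*(Z*u)*u := by ring
      linarith
    linarith [hmul, c1, c2, b1]
lemma epsB_eq {Z : ℝ} (h1 : 1 ≤ Z) : epsB Z = Z := by
  unfold epsB
  rw [min_eq_left (by linarith)]
  ring

lemma asymp {Z : ℝ} (hZ : 16 ≤ Z) :
    |sInf (MS Z) - (Real.pi^2*Z + 1 - 8/Real.pi^2)| ≤ 10/Z := by
  have pl : (3.141592:ℝ) < Real.pi := Real.pi_gt_d6
  have ph : Real.pi < 3.15 := Real.pi_lt_d2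
  have h12 : 1/12 < Z := by linarith
  have hZ0 : (0:ℝ) < Z := by linarith
  obtain ⟨hmem, hmin⟩ := case_big h12
  obtain ⟨P, hPdef⟩ : ∃ x, sInf (MS Z) = x := ⟨_, rfl⟩
  rw [hPdef] at hmem ⊢
  have hepsZ : epsB Z = Z := epsB_eq (by linarith)
  have hP1 : 1 + Z ≤ P := by
    have := hmem.1.1
    rw [hepsZ] at this
    exact this
  have hP17 : 17 ≤ P := by linarith
  have hPle : P ≤ 1 + Real.pi^2*Z := hmem.1.2
  have hH : hB Z P = 0 := hmem.2
  have hPlt : P < 1 + Real.pi^2*Z := by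
    rcases lt_or_eq_of_le hPle with h | h
    · exact h
    · exfalso
      rw [h, hB_top hZ0] at hH
      norm_num at hH
  have hθnn : 0 ≤ tvP Z P := tv_nonneg Z P
  have hθsq' : 4*Z*(tvP Z P)^2 = P - 1 := tv_sq hZ0 (by linarith)
  unfold hB at hH
  obtain ⟨θ, hθdef⟩ : ∃ x, tvP Z P = x := ⟨_, rfl⟩
  rw [hθdef] at hθnn hθsq' hH
  have hθhalf : 1/2 ≤ θ := by
    by_contra h
    push_neg at h
    have h2 : θ^2 < 1/4 := by nlinarith
    have h3 : 4*Z*θ^2 < Z := by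
      nlinarith [mul_pos hZ0 (by linarith : (0:ℝ) < 1/4 - θ^2)]
    linarith
  have hθhi : θ < Real.pi/2 := by
    by_contra h
    push_neg at h
    have h2 : Real.pi^2/4 ≤ θ^2 := by nlinarith [Real.pi_pos]
    have h3 : Real.pi^2*Z ≤ 4*Z*θ^2 := by
      nlinarith [mul_nonneg hZ0.le (by linarith : (0:ℝ) ≤ θ^2 - Real.pi^2/4)]
    linarith
  obtain ⟨u, hudef⟩ : ∃ x, Real.pi/2 - θ = x := ⟨_, rfl⟩
  have hwθ : Real.pi/2 - u = θ := by rw [← hudef]; ring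
  have hu : 0 < u := by rw [← hudef]; linarith
  have hu_hi : u ≤ Real.pi/2 - 1/2 := by rw [← hudef]; linarith
  have hupi : u < Real.pi := by linarith
  have hsinu : 0 < Real.sin u := Real.sin_pos_of_pos_of_lt_pi hu hupi
  have hsθ : Real.sin θ = Real.cos u := by
    rw [← hwθ, Real.sin_pi_div_two_sub]
  have hcθ : Real.cos θ = Real.sin u := by
    rw [← hwθ, Real.cos_pi_div_two_sub]
  have heq : P * θ * Real.sin u = Real.cos u := by
    rw [← hsθ, ← hcθ]
    linarith
  have hPθ0 : (0:ℝ) < P*θ := by nlinarith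
  have hcosu : 0 < Real.cos u := by
    rw [← heq]
    positivity
  have t1 : u * Real.cos u ≤ Real.sin u :=
    mul_cos_le_sin ⟨hu.le, by linarith⟩
  have t3 : (P*θ*u)*Real.cos u ≤ 1*Real.cos u := by
    rw [one_mul]
    calc (P*θ*u)*Real.cos u = P*θ*(u*Real.cos u) := by ring
      _ ≤ P*θ*Real.sin u := mul_le_mul_of_nonneg_left t1 hPθ0.le
      _ = Real.cos u := heq
  have huP : P*θ*u ≤ 1 := le_of_mul_le_mul_right t3 hcosu
  have hPθ : (8:ℝ) ≤ P*θ := by nlinarith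
  have hu18 : u ≤ 1/8 := by nlinarith [mul_le_mul_of_nonneg_left hPθ hu.le]
  have hw1 : 1 ≤ Real.pi/2 - u := by linarith
  have hsin_le : Real.sin u ≤ (u + 2*u^3)*Real.cos u :=
    sin_le_mul_cos ⟨hu.le, by linarith⟩
  have t4 : 1*Real.sin u ≤ ((u+2*u^3)*(P*θ))*Real.sin u := by
    rw [one_mul]
    calc Real.sin u ≤ (u+2*u^3)*Real.cos u := hsin_le
      _ = ((u+2*u^3)*(P*θ))*Real.sin u := by rw [← heq]; ring
  have h2key : 1 ≤ (u+2*u^3)*(P*θ) := le_of_mul_le_mul_right t4 hsinu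
  have hPform : 1 + 4*Z*θ^2 = P := by linarith
  have h1' : u*((1+4*Z*(Real.pi/2-u)^2)*(Real.pi/2-u)) ≤ 1 := by
    rw [hwθ, hPform]
    linarith [huP]
  have h2' : 1 ≤ (u+2*u^3)*((1+4*Z*(Real.pi/2-u)^2)*(Real.pi/2-u)) := by
    rw [hwθ, hPform]
    linarith [h2key]
  have hkey := asymp_key hZ hu hw1 h1' h2'
  rw [hwθ, hPform] at hkey
  exact hkey
lemma sv_pos {Z P : ℝ} (hZ : 0 < Z) (hP : P < 1) : 0 < svP Z P := by
  unfold svP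
  have h1 : 0 < Real.sqrt (1-P) := Real.sqrt_pos.2 (by linarith)
  have h2 : 0 < Real.sqrt Z := Real.sqrt_pos.2 hZ
  positivity

lemma no_sol_below {Z Q : ℝ} (h12 : 1/12 < Z) (hQ0 : 0 < Q) (hQ1 : Q < 1)
    (hf : fB Z Q = 0) : False := by
  have hZ : (0:ℝ) < Z := by linarith
  have hs := sv_pos hZ hQ1
  have hQform : Q = 1 - 4*Z*(svP Z Q)^2 := by linarith [sv_sq hZ hQ1.le]
  unfold fB at hf
  obtain ⟨s, hsdef⟩ : ∃ x, svP Z Q = x := ⟨_, rfl⟩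
  rw [hsdef] at hf hs hQform
  rw [hQform] at hf
  have := fB_pos_aux hs (by linarith : 1/3 < 4*Z)
  linarith


/-- existence of the smallest positive solution P₀(Z) ≠ 1 of the
bifurcation condition, its location relative to 1, and its large-Z asymptotics
P₀(Z) = π²Z + 1 - 8/π² + O(1/Z). -/
theorem P0_exists_and_asymptotics :
    ∃ P0 : ℝ → ℝ,
      (∀ Z : ℝ, 0 < Z → Z ≠ 1/12 →
        0 < P0 Z ∧ P0 Z ≠ 1 ∧ BifCond Z (P0 Z) ∧
        (∀ Q : ℝ, 0 < Q → Q ≠ 1 → BifCond Z Q → P0 Z ≤ Q) ∧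
        (Z < 1/12 → P0 Z ∈ Set.Ioo (0:ℝ) 1) ∧
        (1/12 < Z → 1 < P0 Z)) ∧
      (∃ C > 0, ∃ Z₁ > 0, ∀ Z : ℝ, Z₁ ≤ Z →
        |P0 Z - (Real.pi ^ 2 * Z + 1 - 8 / Real.pi ^ 2)| ≤ C / Z) ∧
      Tendsto (fun Z => P0 Z - Real.pi ^ 2 * Z) atTop
        (nhds (1 - 8 / Real.pi ^ 2)) := by
  refine ⟨fun Z => if Z < 1/12 then sInf (KS Z) else sInf (MS Z), ?_, ?_, ?_⟩
  · intro Z hZ hZne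
    by_cases hlt : Z < 1/12
    · simp only [if_pos hlt]
      obtain ⟨hmem, hpos, hlt1⟩ := case_small hZ hlt
      have hbdd : BddBelow (KS Z) := ⟨0, fun p hp => hp.1.1⟩
      refine ⟨hpos, ne_of_lt hlt1, ?_, ?_, fun _ => ⟨hpos, hlt1⟩, fun h => absurd h (by linarith)⟩
      · exact (bif_iff_f hZ hmem.1.2).mpr hmem.2
      · intro Q hQ0 hQne hBif
        by_cases hQ : Q ≤ 1
        · exact csInf_le hbdd ⟨⟨hQ0.le, hQ⟩, (bif_iff_f hZ hQ).mp hBif⟩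
        · push_neg at hQ
          linarith
    · have h12 : 1/12 < Z := lt_of_le_of_ne (not_lt.1 hlt) (Ne.symm hZne)
      simp only [if_neg hlt]
      obtain ⟨hmem, hmin⟩ := case_big h12
      have heps := eps_pos h12
      have hp1 : 1 < sInf (MS Z) := by
        have := hmem.1.1
        linarith
      refine ⟨by linarith, (ne_of_lt hp1).symm, ?_, ?_,
        fun h => absurd h (by linarith), fun _ => hp1⟩
      · exact (bif_iff_H hZ hp1).mpr hmem.2
      · intro Q hQ0 hQne hBif
        by_cases hQ : Q ≤ 1
        · exfalso
          exact no_sol_below h12 hQ0 (lt_of_le_of_ne hQ hQne)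
            ((bif_iff_f hZ hQ).mp hBif)
        · push_neg at hQ
          exact hmin Q hQ ((bif_iff_H hZ hQ).mp hBif)
  · refine ⟨10, by norm_num, 16, by norm_num, fun Z hZ16 => ?_⟩
    have hlt : ¬ Z < 1/12 := by push_neg; linarith
    simp only [if_neg hlt]
    exact asymp hZ16
  · have hten : Filter.Tendsto (fun Z : ℝ => (10:ℝ)/Z) Filter.atTop (nhds 0) :=
      Filter.Tendsto.div_atTop tendsto_const_nhds Filter.tendsto_id
    have hsq : Filter.Tendsto
        (fun Z : ℝ => ((if Z < 1/12 then sInf (KS Z) else sInf (MS Z)) - Real.pi^2*Z)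
          - (1 - 8/Real.pi^2)) Filter.atTop (nhds 0) := by
      apply squeeze_zero_norm' _ hten
      filter_upwards [Filter.eventually_ge_atTop (16:ℝ)] with Z hZ16
      have hlt : ¬ Z < 1/12 := by push_neg; linarith
      simp only [if_neg hlt, Real.norm_eq_abs]
      have := asymp hZ16
      calc |sInf (MS Z) - Real.pi^2*Z - (1 - 8/Real.pi^2)|
          = |sInf (MS Z) - (Real.pi^2*Z + 1 - 8/Real.pi^2)| := by ring_nf
        _ ≤ 10/Z := this
    have := hsq.add_const (1 - 8/Real.pi^2)
    simp only [sub_add_cancel, zero_add] at this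
    exact this
end
end
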